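/- arXiv:0802.0532 — 6 statements merged into one kernel-verified Lean document; each statement's English description precedes it below -/
import Mathlib

section
/- Let A be a finite collection of covectors on ℂⁿ with nonzero multiplicities c_α such that the bilinear form G(u,v) = Σ_{α∈A} c_α α(u)α(v) is non-degenerate. If for every α ∈ A and every α-series Γ the identity Σ_{β∈Γ} c_β (α,β) α∧β = 0 holds (where (·,·) is the inner product induced by G on the dual space and ∧ denotes the wedge product of covectors), then for every α ∈ A and every two-dimensional plane π containing α, the vector Σ_{β∈A∩π} c_β (α,β) β is proportional to α. -/
open scoped BigOperators

noncomputable section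

abbrev V (n : ℕ) := Fin n → ℂ
abbrev D (n : ℕ) := Module.Dual ℂ (V n)

/-- Wedge of two covectors: `(α∧β)(a,b) = α(a)β(b) − α(b)β(a)`. -/
def wedge {n : ℕ} (α β : D n) (a b : V n) : ℂ := α a * β b - α b * β a

/-- `β` is parallel (collinear) to `α`. -/
def Parallel {n : ℕ} (α β : D n) : Prop := ∃ t : ℂ, β = t • α

/-- Two covectors belong to a common `α`-series: their difference or sum is an
integer multiple of `α`. -/
def SameSer {n : ℕ} (α γ₁ γ₂ : D n) : Prop :=
  ∃ m : ℤ, γ₁ - γ₂ = (m : ℂ) • α ∨ γ₁ + γ₂ = (m : ℂ) • α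

/-- `Γ` is a (maximal) `α`-series of the system `A`. -/
def IsSeries {n : ℕ} (A : Finset (D n)) (α : D n) (Γ : Finset (D n)) : Prop :=
  Γ ⊆ A ∧ (∀ β ∈ Γ, ¬ Parallel α β) ∧
    (∀ γ₁ ∈ Γ, ∀ γ₂ ∈ Γ, SameSer α γ₁ γ₂) ∧
    (∀ β ∈ A, ¬ Parallel α β → (∃ γ ∈ Γ, SameSer α β γ) → β ∈ Γ)

/-- The trigonometric ∨-system series conditions:
for every `α ∈ A` and every `α`-series `Γ`, `Σ_{β∈Γ} c_β (α,β) α∧β = 0`. -/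
def SeriesCond {n : ℕ} (A : Finset (D n)) (c : D n → ℂ) (ip : D n → D n → ℂ) : Prop :=
  ∀ α ∈ A, ∀ Γ : Finset (D n), IsSeries A α Γ →
    ∀ a b : V n, ∑ β ∈ Γ, c β * ip α β * wedge α β a b = 0

/-- The bilinear form `G(u,v) = Σ_{α∈A} c_α α(u) α(v)`. -/
def Gform {n : ℕ} (A : Finset (D n)) (c : D n → ℂ) (u v : V n) : ℂ :=
  ∑ α ∈ A, c α * α u * α v

/-- Non-degeneracy of a bilinear form on `ℂⁿ`. -/
def NonDeg {n : ℕ} (B : V n → V n → ℂ) : Prop :=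
  ∀ u : V n, (∀ v : V n, B u v = 0) → u = 0

/-- All covectors of `A` lie in an `n`-dimensional lattice. -/
def InLattice {n : ℕ} (A : Finset (D n)) : Prop :=
  ∃ f : Fin n → D n, LinearIndependent ℂ f ∧
    ∀ β ∈ A, ∃ m : Fin n → ℤ, β = ∑ i, (m i : ℂ) • f i

/-- The `i`-th coordinate covector. -/
def coD {n : ℕ} (i : Fin n) : D n := LinearMap.proj i

/-- Partial derivative in the `i`-th coordinate direction. -/
def pd {n : ℕ} (i : Fin n) (f : V n → ℂ) (x : V n) : ℂ := fderiv ℂ f x (Pi.single i 1)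

/-- Irreducibility: `A` does not split as a direct sum of two lower-dimensional systems. -/
def Irred {n : ℕ} (A : Finset (D n)) : Prop :=
  ¬ ∃ U₁ U₂ : Submodule ℂ (D n), U₁ ⊓ U₂ = ⊥ ∧ (∀ β ∈ A, β ∈ U₁ ∨ β ∈ U₂) ∧
    (∃ β ∈ A, β ∉ U₁) ∧ (∃ β ∈ A, β ∉ U₂)


lemma sameSer_refl {n : ℕ} (α γ : D n) : SameSer α γ γ := ⟨0, Or.inl (by simp)⟩

lemma sameSer_symm {n : ℕ} {α γ₁ γ₂ : D n} (h : SameSer α γ₁ γ₂) : SameSer α γ₂ γ₁ := by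
  obtain ⟨m, h | h⟩ := h
  · exact ⟨-m, Or.inl (by push_cast; rw [neg_smul, ← h]; abel)⟩
  · exact ⟨m, Or.inr (by rw [← h]; abel)⟩

lemma sameSer_trans {n : ℕ} {α γ₁ γ₂ γ₃ : D n} (h1 : SameSer α γ₁ γ₂)
    (h2 : SameSer α γ₂ γ₃) : SameSer α γ₁ γ₃ := by
  obtain ⟨m, h1 | h1⟩ := h1 <;> obtain ⟨k, h2 | h2⟩ := h2
  · exact ⟨m + k, Or.inl (by push_cast; rw [add_smul, ← h1, ← h2]; abel)⟩
  · exact ⟨m + k, Or.inr (by push_cast; rw [add_smul, ← h1, ← h2]; abel)⟩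
  · exact ⟨m - k, Or.inr (by push_cast; rw [sub_smul, ← h1, ← h2]; abel)⟩
  · exact ⟨m - k, Or.inl (by push_cast; rw [sub_smul, ← h1, ← h2]; abel)⟩

open Classical in
/-- Proposition 1: a trigonometric ∨-system yields, in every
two-dimensional plane through a covector `α`, the rational ∨-condition:
`Σ_{β∈A∩π} c_β (α,β) β` is proportional to `α`. -/
theorem trig_vee_gives_rational_vee (n : ℕ) (A : Finset (D n)) (c : D n → ℂ)
    (hc : ∀ α ∈ A, c α ≠ 0)
    (hnd : NonDeg (Gform A c))
    (vee : D n → V n) (hvee : ∀ ξ : D n, ∀ v : V n, Gform A c (vee ξ) v = ξ v)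
    (hser : SeriesCond A c (fun ξ η => ξ (vee η))) :
    ∀ α ∈ A, ∀ π : Submodule ℂ (D n), Module.finrank ℂ π = 2 → α ∈ π →
      ∃ t : ℂ, (∑ β ∈ A, (if β ∈ π then c β * α (vee β) else 0) • β) = t • α := by
  classical
  intro α hα π hπ2 hαπ
  by_cases hα0 : α = 0
  · exact ⟨0, by simp [hα0]⟩
  -- the key wedge identity for the whole filtered sum
  have key : ∀ a b : V n,
      ∑ β ∈ A.filter (· ∈ π), c β * α (vee β) * wedge α β a b = 0 := by
    intro a b
    rw [← Finset.sum_filter_add_sum_filter_not (A.filter (· ∈ π)) (Parallel α)]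
    have hpar : ∑ β ∈ (A.filter (· ∈ π)).filter (Parallel α),
        c β * α (vee β) * wedge α β a b = 0 := by
      apply Finset.sum_eq_zero
      intro β hβ
      obtain ⟨t, ht⟩ := (Finset.mem_filter.mp hβ).2
      have : wedge α β a b = 0 := by simp [wedge, ht]; ring
      rw [this, mul_zero]
    rw [hpar, zero_add]
    set T := (A.filter (· ∈ π)).filter (fun β => ¬ Parallel α β) with hT
    set g : D n → Finset (D n) :=
      fun β => A.filter (fun δ => ¬ Parallel α δ ∧ SameSer α β δ) with hg
    have hmaps : ∀ β ∈ T, g β ∈ T.image g := fun β hβ => Finset.mem_image_of_mem g hβ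
    rw [← Finset.sum_fiberwise_of_maps_to hmaps (fun β => c β * α (vee β) * wedge α β a b)]
    apply Finset.sum_eq_zero
    intro Γ hΓ
    obtain ⟨β₀, hβ₀T, hgβ₀⟩ := Finset.mem_image.mp hΓ
    have hβ₀A : β₀ ∈ A := (Finset.mem_filter.mp (Finset.mem_filter.mp hβ₀T).1).1
    have hβ₀π : β₀ ∈ π := (Finset.mem_filter.mp (Finset.mem_filter.mp hβ₀T).1).2
    have hβ₀np : ¬ Parallel α β₀ := (Finset.mem_filter.mp hβ₀T).2
    have hmemΓ : ∀ δ, δ ∈ Γ ↔ δ ∈ A ∧ ¬ Parallel α δ ∧ SameSer α β₀ δ := by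
      intro δ; rw [← hgβ₀]; simp [hg]
    -- membership in π for elements of Γ
    have hΓπ : ∀ δ ∈ Γ, δ ∈ π := by
      intro δ hδ
      obtain ⟨-, -, m, h | h⟩ := (hmemΓ δ).mp hδ
      · have : δ = β₀ - (m : ℂ) • α := by rw [← h]; abel
        rw [this]; exact sub_mem hβ₀π (Submodule.smul_mem _ _ hαπ)
      · have : δ = (m : ℂ) • α - β₀ := by rw [← h]; abel
        rw [this]; exact sub_mem (Submodule.smul_mem _ _ hαπ) hβ₀π
    have hfib : T.filter (fun β => g β = Γ) = Γ := by
      ext δ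
      simp only [Finset.mem_filter]
      constructor
      · rintro ⟨hδT, hgδ⟩
        rw [← hgδ]
        simp only [hg, Finset.mem_filter]
        exact ⟨(Finset.mem_filter.mp (Finset.mem_filter.mp hδT).1).1,
          (Finset.mem_filter.mp hδT).2, sameSer_refl α δ⟩
      · intro hδ
        obtain ⟨hδA, hδnp, hδser⟩ := (hmemΓ δ).mp hδ
        refine ⟨?_, ?_⟩
        · simp only [hT, Finset.mem_filter]
          exact ⟨⟨hδA, hΓπ δ hδ⟩, hδnp⟩
        · rw [← hgβ₀]
          ext ε
          simp only [hg, Finset.mem_filter]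
          constructor
          · rintro ⟨hεA, hεnp, hεser⟩
            exact ⟨hεA, hεnp, sameSer_trans hδser hεser⟩
          · rintro ⟨hεA, hεnp, hεser⟩
            exact ⟨hεA, hεnp, sameSer_trans (sameSer_symm hδser) hεser⟩
    rw [hfib]
    refine hser α hα Γ ⟨?_, ?_, ?_, ?_⟩ a b
    · intro δ hδ; exact ((hmemΓ δ).mp hδ).1
    · intro δ hδ; exact ((hmemΓ δ).mp hδ).2.1
    · intro γ₁ h₁ γ₂ h₂
      exact sameSer_trans (sameSer_symm ((hmemΓ γ₁).mp h₁).2.2) ((hmemΓ γ₂).mp h₂).2.2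
    · rintro β hβA hβnp ⟨γ, hγ, hβγ⟩
      exact (hmemΓ β).mpr ⟨hβA, hβnp, sameSer_trans ((hmemΓ γ).mp hγ).2.2 (sameSer_symm hβγ)⟩
  set S : D n := ∑ β ∈ A, (if β ∈ π then c β * α (vee β) else 0) • β with hS
  have hwedge : ∀ a b : V n, α a * S b - α b * S a = 0 := by
    intro a b
    have hSapp : ∀ x : V n, S x = ∑ β ∈ A.filter (· ∈ π), c β * α (vee β) * β x := by
      intro x
      rw [hS, Finset.sum_filter]
      simp only [LinearMap.coe_sum, Finset.sum_apply, LinearMap.smul_apply, smul_eq_mul]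
      apply Finset.sum_congr rfl
      intro β _
      split <;> simp
    rw [hSapp, hSapp, Finset.mul_sum, Finset.mul_sum, ← Finset.sum_sub_distrib]
    rw [← key a b]
    apply Finset.sum_congr rfl
    intro β _
    simp [wedge]; ring
  obtain ⟨a₀, ha₀⟩ : ∃ a, α a ≠ 0 := by
    by_contra h
    push_neg at h
    exact hα0 (LinearMap.ext h)
  refine ⟨S a₀ / α a₀, LinearMap.ext fun b => ?_⟩
  have := hwedge a₀ b
  simp only [LinearMap.smul_apply, smul_eq_mul]
  field_simp
  linear_combination this
end
end

section
/- Let A consist of two non-collinear covectors α, β on ℂ² with nonzero multiplicities c_α, c_β, and suppose the form G = c_α α⊗α + c_β β⊗β is non-degenerate. Then (α,β) = 0 with respect to the inner product on the dual space induced by G, and consequently A satisfies all trigonometric ∨-system series conditions. -/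
open scoped BigOperators

noncomputable section

/-- a system of two non-collinear covectors on ℂ² with non-degenerate
form satisfies `(α,β)=0` and hence all trigonometric ∨-system series conditions. -/
theorem two_covectors (α β : D 2) (hind : LinearIndependent ℂ ![α, β])
    (cα cβ : ℂ) (hcα : cα ≠ 0) (hcβ : cβ ≠ 0)
    (A : Finset (D 2)) (hA : ∀ ξ, ξ ∈ A ↔ ξ = α ∨ ξ = β)
    (c : D 2 → ℂ) (hc1 : c α = cα) (hc2 : c β = cβ)
    (hnd : NonDeg (Gform A c))
    (vee : D 2 → V 2) (hvee : ∀ ξ : D 2, ∀ v : V 2, Gform A c (vee ξ) v = ξ v) :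
    α (vee β) = 0 ∧ SeriesCond A c (fun ξ η => ξ (vee η)) := by

  classical
  have hne : α ≠ β := by
    intro h
    have h01 : (0 : Fin 2) = 1 := hind.injective (by simp [h])
    simp at h01
  have hAset : A = {α, β} := Finset.ext fun ξ => by
    simp [hA]
  have hG : ∀ u v, Gform A c u v = cα * α u * α v + cβ * β u * β v := by
    intro u v
    rw [Gform, hAset, Finset.sum_pair hne, hc1, hc2]
  have hpair : ∀ s t : ℂ, (∀ v, s * α v + t * β v = 0) → s = 0 ∧ t = 0 := by
    intro s t h
    have h0 : s • α + t • β = 0 := by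
      apply LinearMap.ext; intro v; simpa [smul_eq_mul] using h v
    have hz := Fintype.linearIndependent_iff.mp hind ![s, t]
      (by simpa [Fin.sum_univ_two] using h0)
    exact ⟨hz 0, hz 1⟩
  have h1 : ∀ v, (cα * α (vee β)) * α v + (cβ * β (vee β) - 1) * β v = 0 := by
    intro v
    have h := hvee β v
    rw [hG] at h
    linear_combination h
  have h2 : ∀ v, (cα * α (vee α) - 1) * α v + (cβ * β (vee α)) * β v = 0 := by
    intro v
    have h := hvee α v
    rw [hG] at h
    linear_combination h
  have key1 : α (vee β) = 0 := by
    rcases mul_eq_zero.mp (hpair _ _ h1).1 with h | h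
    · exact absurd h hcα
    · exact h
  have key2 : β (vee α) = 0 := by
    rcases mul_eq_zero.mp (hpair _ _ h2).2 with h | h
    · exact absurd h hcβ
    · exact h
  refine ⟨key1, ?_⟩
  intro ξ hξ Γ hΓ a b
  apply Finset.sum_eq_zero
  intro γ hγ
  have hγA := hΓ.1 hγ
  have hnp := hΓ.2.1 γ hγ
  rcases (hA ξ).mp hξ with rfl | rfl
  · rcases (hA γ).mp hγA with rfl | rfl
    · exact absurd ⟨1, (one_smul ℂ γ).symm⟩ hnp
    · simp [key1]
  · rcases (hA γ).mp hγA with rfl | rfl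
    · simp [key2]
    · exact absurd ⟨1, (one_smul ℂ γ).symm⟩ hnp
end
end

section
/- Let A consist of three pairwise non-collinear covectors α, β, γ on ℂ² with nonzero multiplicities c_α, c_β, c_γ, and suppose the form G = Σ c_δ δ⊗δ is non-degenerate. Then A is a trigonometric ∨-system (i.e., all series conditions Σ_{δ∈Γ} c_δ (α',δ) α'∧δ = 0 hold) if and only if α ± β ± γ = 0 for some choice of signs. -/
open scoped BigOperators

noncomputable section

private lemma pair_rel {n : ℕ} {x y : D n} (h : LinearIndependent ℂ ![x, y]) :
    ∀ s t : ℂ, s • x + t • y = 0 → s = 0 ∧ t = 0 := fun s t hst =>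
  LinearIndependent.pair_iff.mp h s t hst

private lemma ne_of_indep {n : ℕ} {x y : D n} (h : LinearIndependent ℂ ![x, y]) : x ≠ y := by
  intro hxy
  have := (pair_rel h 1 (-1) (by rw [hxy]; module)).1
  exact one_ne_zero this

private lemma not_parallel {n : ℕ} {x y : D n} (h : LinearIndependent ℂ ![x, y]) :
    ¬ Parallel x y := by
  rintro ⟨t, rfl⟩
  have := (pair_rel h t (-1) (by module)).2
  simp at this

private lemma parallel_self {n : ℕ} (x : D n) : Parallel x x := ⟨1, (one_smul _ _).symm⟩

private lemma sameSer_symm_s2 {n : ℕ} {x y z : D n} (h : SameSer x y z) : SameSer x z y := by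
  obtain ⟨m, h | h⟩ := h
  · exact ⟨-m, Or.inl (by push_cast; rw [neg_smul, ← h]; abel)⟩
  · exact ⟨m, Or.inr (by rw [← h]; abel)⟩

private lemma sameSer_self {n : ℕ} (x y : D n) : SameSer x y y :=
  ⟨0, Or.inl (by simp)⟩

private lemma wedge_ne_zero {n : ℕ} {x y : D n} (h : LinearIndependent ℂ ![x, y]) :
    ∃ a b, wedge x y a b ≠ 0 := by
  by_contra hw
  push_neg at hw
  have hx : x ≠ 0 := by
    intro h0
    have := (pair_rel h 1 0 (by rw [h0]; simp)).1
    exact one_ne_zero this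
  obtain ⟨a, ha⟩ : ∃ a, x a ≠ 0 := by
    by_contra h0
    push_neg at h0
    exact hx (LinearMap.ext fun v => h0 v)
  apply not_parallel h
  refine ⟨y a / x a, LinearMap.ext fun b => ?_⟩
  have := hw a b
  simp only [wedge] at this
  simp only [LinearMap.smul_apply, smul_eq_mul]
  field_simp
  linear_combination this
private lemma vee_symm {n : ℕ} (A : Finset (D n)) (c : D n → ℂ) (vee : D n → V n)
    (hvee : ∀ ξ v, Gform A c (vee ξ) v = ξ v) (ξ η : D n) :
    ξ (vee η) = η (vee ξ) := by
  rw [← hvee ξ (vee η), ← hvee η (vee ξ)]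
  simp only [Gform]
  exact Finset.sum_congr rfl fun δ _ => by ring

private lemma key_id (x y z : D 2) (hxy : x ≠ y) (hxz : x ≠ z) (hyz : y ≠ z)
    (A : Finset (D 2)) (hA : ∀ ξ, ξ ∈ A ↔ ξ = x ∨ ξ = y ∨ ξ = z)
    (c : D 2 → ℂ)
    (vee : D 2 → V 2) (hvee : ∀ ξ v, Gform A c (vee ξ) v = ξ v)
    (ξ : D 2) (v : V 2) :
    ξ v = c x * x (vee ξ) * x v + c y * y (vee ξ) * y v + c z * z (vee ξ) * z v := by
  classical
  have hAeq : A = {x, y, z} := by ext δ; simp [hA]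
  rw [← hvee ξ v]
  simp only [Gform, hAeq]
  rw [Finset.sum_insert (by simp [hxy, hxz]), Finset.sum_insert (by simp [hyz]),
    Finset.sum_singleton, ← add_assoc]

private lemma exists_rep (x y z : D 2) (hyz : LinearIndependent ℂ ![y, z]) :
    ∃ s t : ℂ, x = s • y + t • z := by
  have hcard : ¬ LinearIndependent ℂ ![y, z, x] := by
    intro h
    have h2 := LinearIndependent.fintype_card_le_finrank h
    rw [Subspace.dual_finrank_eq] at h2
    simp [Module.finrank_fintype_fun_eq_card] at h2
  rw [Fintype.not_linearIndependent_iff] at hcard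
  obtain ⟨g, hg, i, hi⟩ := hcard
  rw [Fin.sum_univ_three] at hg
  simp only [Matrix.cons_val_zero, Matrix.cons_val_one, Matrix.head_cons,
    Matrix.cons_val_two, Matrix.tail_cons] at hg
  have hg2 : g 2 ≠ 0 := by
    intro h0
    rw [h0, zero_smul, add_zero] at hg
    obtain ⟨e0, e1⟩ := pair_rel hyz _ _ hg
    fin_cases i <;> simp_all
  have hx : g 2 • x = (-(g 0)) • y + (-(g 1)) • z := by
    have : g 2 • x = (g 0 • y + g 1 • z + g 2 • x) - g 0 • y - g 1 • z := by module
    rw [this, hg]; module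
  refine ⟨(g 2)⁻¹ * -(g 0), (g 2)⁻¹ * -(g 1), ?_⟩
  rw [mul_smul, mul_smul, ← smul_add, ← hx, ← mul_smul, inv_mul_cancel₀ hg2, one_smul]
private lemma sameser_of_cond (x y z : D 2)
    (hxy : LinearIndependent ℂ ![x, y]) (hxz : LinearIndependent ℂ ![x, z])
    (hyz : LinearIndependent ℂ ![y, z])
    (A : Finset (D 2)) (hA : ∀ ξ, ξ ∈ A ↔ ξ = x ∨ ξ = y ∨ ξ = z)
    (c : D 2 → ℂ) (hcy : c y ≠ 0) (hcz : c z ≠ 0)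
    (vee : D 2 → V 2) (hvee : ∀ ξ v, Gform A c (vee ξ) v = ξ v)
    (hsc : SeriesCond A c (fun ξ η => ξ (vee η))) :
    SameSer x y z := by
  by_contra hns
  have hxA : x ∈ A := (hA x).2 (Or.inl rfl)
  have hyA : y ∈ A := (hA y).2 (Or.inr (Or.inl rfl))
  have hzA : z ∈ A := (hA z).2 (Or.inr (Or.inr rfl))
  have hip : ∀ w : D 2, c w ≠ 0 → LinearIndependent ℂ ![x, w] →
      IsSeries A x {w} → x (vee w) = 0 := by
    intro w hcw hxw hser
    obtain ⟨a, b, hw⟩ := wedge_ne_zero hxw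
    have h0 := hsc x hxA {w} hser a b
    rw [Finset.sum_singleton] at h0
    simp only at h0
    rcases mul_eq_zero.1 h0 with h | h
    · rcases mul_eq_zero.1 h with h' | h'
      · exact absurd h' hcw
      · exact h'
    · exact absurd h hw
  have hsery : IsSeries A x {y} := by
    refine ⟨Finset.singleton_subset_iff.2 hyA, ?_, ?_, ?_⟩
    · intro w hw
      rw [Finset.mem_singleton] at hw
      subst hw
      exact not_parallel hxy
    · intro γ₁ hγ₁ γ₂ hγ₂
      rw [Finset.mem_singleton] at hγ₁ hγ₂
      subst hγ₁; subst hγ₂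
      exact sameSer_self x γ₂
    · rintro δ hδA hδpar ⟨γ', hγ', hss⟩
      rw [Finset.mem_singleton] at hγ'
      subst hγ'
      rcases (hA δ).1 hδA with rfl | rfl | rfl
      · exact absurd (parallel_self δ) hδpar
      · exact Finset.mem_singleton_self _
      · exact absurd (sameSer_symm_s2 hss) hns
  have hserz : IsSeries A x {z} := by
    refine ⟨Finset.singleton_subset_iff.2 hzA, ?_, ?_, ?_⟩
    · intro w hw
      rw [Finset.mem_singleton] at hw
      subst hw
      exact not_parallel hxz
    · intro γ₁ hγ₁ γ₂ hγ₂
      rw [Finset.mem_singleton] at hγ₁ hγ₂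
      subst hγ₁; subst hγ₂
      exact sameSer_self x γ₂
    · rintro δ hδA hδpar ⟨γ', hγ', hss⟩
      rw [Finset.mem_singleton] at hγ'
      subst hγ'
      rcases (hA δ).1 hδA with rfl | rfl | rfl
      · exact absurd (parallel_self δ) hδpar
      · exact absurd hss hns
      · exact Finset.mem_singleton_self _
  have hipy := hip y hcy hxy hsery
  have hipz := hip z hcz hxz hserz
  have hyx : y (vee x) = 0 := (vee_symm A c vee hvee y x).trans hipy
  have hzx : z (vee x) = 0 := (vee_symm A c vee hvee z x).trans hipz
  obtain ⟨s, t, hrep⟩ := exists_rep x y z hyz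
  have hxx : x (vee x) = 0 := by
    have h1 := congrArg (fun f : D 2 => f (vee x)) hrep
    simp only [LinearMap.add_apply, LinearMap.smul_apply, smul_eq_mul] at h1
    rw [hyx, hzx] at h1
    simpa using h1
  have hx0 : x = 0 := by
    apply LinearMap.ext
    intro v
    have hk := key_id x y z (ne_of_indep hxy) (ne_of_indep hxz) (ne_of_indep hyz)
      A hA c vee hvee x v
    rw [hxx, hyx, hzx] at hk
    simpa using hk
  exact one_ne_zero (pair_rel hxy 1 0 (by rw [hx0]; simp)).1
private lemma pair_symm {n : ℕ} {x y : D n} (h : LinearIndependent ℂ ![x, y]) :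
    LinearIndependent ℂ ![y, x] :=
  LinearIndependent.pair_iff.2 fun s t hst =>
    (pair_rel h t s (by rw [add_comm]; exact hst)).symm

private lemma sameSer_of_comb {x y z : D 2} {d e : ℂ} (hd : d = 1 ∨ d = -1)
    (he : e = 1 ∨ e = -1) (h : ∀ v, y v + e * z v = d * x v) : SameSer x y z := by
  rcases hd with rfl | rfl <;> rcases he with rfl | rfl
  · exact ⟨1, Or.inr (LinearMap.ext fun v => by
      simp only [LinearMap.add_apply, LinearMap.smul_apply, smul_eq_mul, Int.cast_one]
      linear_combination h v)⟩
  · exact ⟨1, Or.inl (LinearMap.ext fun v => by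
      simp only [LinearMap.sub_apply, LinearMap.smul_apply, smul_eq_mul, Int.cast_one]
      linear_combination h v)⟩
  · exact ⟨-1, Or.inr (LinearMap.ext fun v => by
      simp only [LinearMap.add_apply, LinearMap.smul_apply, smul_eq_mul,
        Int.cast_neg, Int.cast_one]
      linear_combination h v)⟩
  · exact ⟨-1, Or.inl (LinearMap.ext fun v => by
      simp only [LinearMap.sub_apply, LinearMap.smul_apply, smul_eq_mul,
        Int.cast_neg, Int.cast_one]
      linear_combination h v)⟩

private lemma sameSer_pointwise {x y z : D 2} (h : SameSer x y z) :
    ∃ (m : ℤ) (e : ℂ), (e = 1 ∨ e = -1) ∧ ∀ v, y v + e * z v = (m : ℂ) * x v := by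
  obtain ⟨m, h | h⟩ := h
  · refine ⟨m, -1, Or.inr rfl, fun v => ?_⟩
    have h' := LinearMap.congr_fun h v
    simp only [LinearMap.sub_apply, LinearMap.smul_apply, smul_eq_mul] at h'
    linear_combination h'
  · refine ⟨m, 1, Or.inl rfl, fun v => ?_⟩
    have h' := LinearMap.congr_fun h v
    simp only [LinearMap.add_apply, LinearMap.smul_apply, smul_eq_mul] at h'
    linear_combination h'
/-- Proposition 2, first part: three pairwise non-collinear covectors
form a trigonometric ∨-system iff `α ± β ± γ = 0` for some choice of signs. -/
theorem three_covectors (α β γ : D 2)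
    (h1 : LinearIndependent ℂ ![α, β]) (h2 : LinearIndependent ℂ ![α, γ])
    (h3 : LinearIndependent ℂ ![β, γ])
    (cα cβ cγ : ℂ) (hcα : cα ≠ 0) (hcβ : cβ ≠ 0) (hcγ : cγ ≠ 0)
    (A : Finset (D 2)) (hA : ∀ ξ, ξ ∈ A ↔ ξ = α ∨ ξ = β ∨ ξ = γ)
    (c : D 2 → ℂ) (hc1 : c α = cα) (hc2 : c β = cβ) (hc3 : c γ = cγ)
    (hnd : NonDeg (Gform A c))
    (vee : D 2 → V 2) (hvee : ∀ ξ : D 2, ∀ v : V 2, Gform A c (vee ξ) v = ξ v) :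
    SeriesCond A c (fun ξ η => ξ (vee η)) ↔
      ∃ ε₁ ε₂ : ℂ, (ε₁ = 1 ∨ ε₁ = -1) ∧ (ε₂ = 1 ∨ ε₂ = -1) ∧
        α + ε₁ • β + ε₂ • γ = 0 := by
  classical
  have hisymm := vee_symm A c vee hvee
  have hcα' : c α ≠ 0 := by rw [hc1]; exact hcα
  have hcβ' : c β ≠ 0 := by rw [hc2]; exact hcβ
  have hcγ' : c γ ≠ 0 := by rw [hc3]; exact hcγ
  have hαA : α ∈ A := (hA α).2 (Or.inl rfl)
  have hβA : β ∈ A := (hA β).2 (Or.inr (Or.inl rfl))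
  have hγA : γ ∈ A := (hA γ).2 (Or.inr (Or.inr rfl))
  constructor
  · intro hsc
    have hss1 : SameSer α β γ :=
      sameser_of_cond α β γ h1 h2 h3 A hA c hcβ' hcγ' vee hvee hsc
    have hA2 : ∀ ξ, ξ ∈ A ↔ ξ = β ∨ ξ = α ∨ ξ = γ := fun ξ => (hA ξ).trans (by tauto)
    have hss2 : SameSer β α γ :=
      sameser_of_cond β α γ (pair_symm h1) h3 h2 A hA2 c hcα' hcγ' vee hvee hsc
    obtain ⟨m, e, he, hp1⟩ := sameSer_pointwise hss1
    obtain ⟨m', e', he', hp2⟩ := sameSer_pointwise hss2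
    have hrel : ((m' : ℂ) * (m : ℂ) - 1) • α + (-(e' + (m' : ℂ) * e)) • γ = 0 := by
      apply LinearMap.ext
      intro v
      simp only [LinearMap.add_apply, LinearMap.smul_apply, LinearMap.zero_apply, smul_eq_mul]
      linear_combination (-(m' : ℂ)) * hp1 v - hp2 v
    obtain ⟨hm1, hm2⟩ := pair_rel h2 _ _ hrel
    have hmm : m' * m = 1 := by
      have : ((m' * m : ℤ) : ℂ) = ((1 : ℤ) : ℂ) := by push_cast; linear_combination hm1
      exact_mod_cast this
    have he2' : e' = -((m' : ℂ)) * e := by linear_combination -hm2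
    rcases Int.mul_eq_one_iff_eq_one_or_neg_one.1 hmm with ⟨hm'1, hmv⟩ | ⟨hm'1, hmv⟩
    · subst hmv
      refine ⟨-1, -e, Or.inr rfl, by rcases he with rfl | rfl <;> norm_num, ?_⟩
      apply LinearMap.ext
      intro v
      have h' := hp1 v
      push_cast at h'
      simp only [LinearMap.add_apply, LinearMap.smul_apply, LinearMap.zero_apply, smul_eq_mul]
      linear_combination -h'
    · subst hmv
      refine ⟨1, e, Or.inl rfl, he, ?_⟩
      apply LinearMap.ext
      intro v
      have h' := hp1 v
      push_cast at h'
      simp only [LinearMap.add_apply, LinearMap.smul_apply, LinearMap.zero_apply, smul_eq_mul]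
      linear_combination h'
  · rintro ⟨ε₁, ε₂, hε₁, hε₂, hrel⟩
    have he1 : ε₁ * ε₁ = 1 := by rcases hε₁ with rfl | rfl <;> norm_num
    have he2 : ε₂ * ε₂ = 1 := by rcases hε₂ with rfl | rfl <;> norm_num
    have hpt : ∀ v, α v + ε₁ * β v + ε₂ * γ v = 0 := by
      intro v
      have h' := LinearMap.congr_fun hrel v
      simp only [LinearMap.add_apply, LinearMap.smul_apply, LinearMap.zero_apply,
        smul_eq_mul] at h'
      linear_combination h'
    have hab : α ≠ β := ne_of_indep h1
    have hac : α ≠ γ := ne_of_indep h2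
    have hbc : β ≠ γ := ne_of_indep h3
    -- the three key scalar relations
    have hrel1 : (1 - c α * α (vee α) + ε₂ * (c γ * γ (vee α))) • α +
        (ε₁ * ε₂ * (c γ * γ (vee α)) - c β * β (vee α)) • β = 0 := by
      apply LinearMap.ext
      intro v
      have hk := key_id α β γ hab hac hbc A hA c vee hvee α v
      have h2' := hpt v
      simp only [LinearMap.add_apply, LinearMap.smul_apply, LinearMap.zero_apply, smul_eq_mul]
      linear_combination hk + (c γ * γ (vee α) * ε₂) * h2' - (c γ * γ (vee α) * γ v) * he2
    have R1 : ε₁ * ε₂ * (c γ * γ (vee α)) - c β * β (vee α) = 0 :=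
      (pair_rel h1 _ _ hrel1).2
    have hrel2 : (c α * α (vee β) - ε₂ * (c γ * γ (vee β))) • α +
        (c β * β (vee β) - 1 - ε₁ * ε₂ * (c γ * γ (vee β))) • β = 0 := by
      apply LinearMap.ext
      intro v
      have hk := key_id α β γ hab hac hbc A hA c vee hvee β v
      have h2' := hpt v
      simp only [LinearMap.add_apply, LinearMap.smul_apply, LinearMap.zero_apply, smul_eq_mul]
      linear_combination -hk - (c γ * γ (vee β) * ε₂) * h2' + (c γ * γ (vee β) * γ v) * he2
    have R2 : c α * α (vee β) - ε₂ * (c γ * γ (vee β)) = 0 := (pair_rel h1 _ _ hrel2).1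
    have hrel3 : (c α * α (vee γ) - ε₁ * (c β * β (vee γ))) • α +
        (c γ * γ (vee γ) - 1 - ε₁ * ε₂ * (c β * β (vee γ))) • γ = 0 := by
      apply LinearMap.ext
      intro v
      have hk := key_id α β γ hab hac hbc A hA c vee hvee γ v
      have h2' := hpt v
      simp only [LinearMap.add_apply, LinearMap.smul_apply, LinearMap.zero_apply, smul_eq_mul]
      linear_combination -hk - (c β * β (vee γ) * ε₁) * h2' + (c β * β (vee γ) * β v) * he1
    have R3 : c α * α (vee γ) - ε₁ * (c β * β (vee γ)) = 0 := (pair_rel h2 _ _ hrel3).1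
    -- the three same-series facts
    have hss1 : SameSer α β γ := by
      refine sameSer_of_comb (d := -ε₁) (e := ε₁ * ε₂)
        (by rcases hε₁ with rfl | rfl <;> norm_num)
        (by rcases hε₁ with rfl | rfl <;> rcases hε₂ with rfl | rfl <;> norm_num)
        (fun v => by linear_combination ε₁ * hpt v - β v * he1)
    have hss2 : SameSer β α γ := by
      refine sameSer_of_comb (d := -ε₁) (e := ε₂)
        (by rcases hε₁ with rfl | rfl <;> norm_num) hε₂
        (fun v => by linear_combination hpt v)
    have hss3 : SameSer γ α β := by
      refine sameSer_of_comb (d := -ε₂) (e := ε₁)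
        (by rcases hε₂ with rfl | rfl <;> norm_num) hε₁
        (fun v => by linear_combination hpt v)
    intro ξ hξA Γ hΓ a b
    obtain ⟨hsub, hpar, hpair, hmax⟩ := hΓ
    rcases (hA ξ).1 hξA with rfl | rfl | rfl
    · -- ξ = ξ
      have hnm : ξ ∉ Γ := fun h => hpar ξ h (parallel_self ξ)
      by_cases hb : β ∈ Γ
      · have hg : γ ∈ Γ := hmax γ hγA (not_parallel h2) ⟨β, hb, sameSer_symm_s2 hss1⟩
        have hΓeq : Γ = {β, γ} := by
          apply Finset.Subset.antisymm
          · intro δ hδ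
            rcases (hA δ).1 (hsub hδ) with rfl | rfl | rfl
            · exact absurd hδ hnm
            · simp
            · simp
          · intro δ hδ
            rcases Finset.mem_insert.1 hδ with rfl | hδ'
            · exact hb
            · rw [Finset.mem_singleton.1 hδ']; exact hg
        rw [hΓeq, Finset.sum_insert (by simp [hbc]), Finset.sum_singleton]
        simp only [wedge]
        have R1' : ε₁ * ε₂ * (c γ * ξ (vee γ)) - c β * ξ (vee β) = 0 := by
          rw [hisymm ξ γ, hisymm ξ β]; exact R1
        have hγa : γ a = -(ε₂ * ξ a) - ε₂ * ε₁ * β a := by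
          linear_combination ε₂ * hpt a - γ a * he2
        have hγb : γ b = -(ε₂ * ξ b) - ε₂ * ε₁ * β b := by
          linear_combination ε₂ * hpt b - γ b * he2
        rw [hγa, hγb]
        linear_combination (-(ξ a * β b - ξ b * β a)) * R1'
      · have hg : γ ∉ Γ := fun h => hb (hmax β hβA (not_parallel h1) ⟨γ, h, hss1⟩)
        have hΓeq : Γ = ∅ := by
          apply Finset.eq_empty_iff_forall_notMem.2
          intro δ hδ
          rcases (hA δ).1 (hsub hδ) with rfl | rfl | rfl
          · exact hnm hδ
          · exact hb hδ
          · exact hg hδ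
        rw [hΓeq, Finset.sum_empty]
    · -- ξ = ξ
      have hnm : ξ ∉ Γ := fun h => hpar ξ h (parallel_self ξ)
      by_cases hb : α ∈ Γ
      · have hg : γ ∈ Γ := hmax γ hγA (not_parallel h3) ⟨α, hb, sameSer_symm_s2 hss2⟩
        have hΓeq : Γ = {α, γ} := by
          apply Finset.Subset.antisymm
          · intro δ hδ
            rcases (hA δ).1 (hsub hδ) with rfl | rfl | rfl
            · simp
            · exact absurd hδ hnm
            · simp
          · intro δ hδ
            rcases Finset.mem_insert.1 hδ with rfl | hδ'
            · exact hb
            · rw [Finset.mem_singleton.1 hδ']; exact hg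
        rw [hΓeq, Finset.sum_insert (by simp [hac]), Finset.sum_singleton]
        simp only [wedge]
        have R2' : c α * ξ (vee α) - ε₂ * (c γ * ξ (vee γ)) = 0 := by
          rw [hisymm ξ α, hisymm ξ γ]; exact R2
        have hαa : α a = -(ε₁ * ξ a) - ε₂ * γ a := by linear_combination hpt a
        have hαb : α b = -(ε₁ * ξ b) - ε₂ * γ b := by linear_combination hpt b
        rw [hαa, hαb]
        linear_combination (-(ε₂) * (ξ a * γ b - ξ b * γ a)) * R2' -
          (c γ * ξ (vee γ) * (ξ a * γ b - ξ b * γ a)) * he2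
      · have hg : γ ∉ Γ := fun h => hb (hmax α hαA (not_parallel (pair_symm h1)) ⟨γ, h, hss2⟩)
        have hΓeq : Γ = ∅ := by
          apply Finset.eq_empty_iff_forall_notMem.2
          intro δ hδ
          rcases (hA δ).1 (hsub hδ) with rfl | rfl | rfl
          · exact hb hδ
          · exact hnm hδ
          · exact hg hδ
        rw [hΓeq, Finset.sum_empty]
    · -- ξ = ξ
      have hnm : ξ ∉ Γ := fun h => hpar ξ h (parallel_self ξ)
      by_cases hb : α ∈ Γ
      · have hg : β ∈ Γ := hmax β hβA (not_parallel (pair_symm h3)) ⟨α, hb, sameSer_symm_s2 hss3⟩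
        have hΓeq : Γ = {α, β} := by
          apply Finset.Subset.antisymm
          · intro δ hδ
            rcases (hA δ).1 (hsub hδ) with rfl | rfl | rfl
            · simp
            · simp
            · exact absurd hδ hnm
          · intro δ hδ
            rcases Finset.mem_insert.1 hδ with rfl | hδ'
            · exact hb
            · rw [Finset.mem_singleton.1 hδ']; exact hg
        rw [hΓeq, Finset.sum_insert (by simp [hab]), Finset.sum_singleton]
        simp only [wedge]
        have R3' : c α * ξ (vee α) - ε₁ * (c β * ξ (vee β)) = 0 := by
          rw [hisymm ξ α, hisymm ξ β]; exact R3
        have hβa : β a = -(ε₁ * α a) - ε₁ * ε₂ * ξ a := by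
          linear_combination ε₁ * hpt a - β a * he1
        have hβb : β b = -(ε₁ * α b) - ε₁ * ε₂ * ξ b := by
          linear_combination ε₁ * hpt b - β b * he1
        rw [hβa, hβb]
        linear_combination (ξ a * α b - ξ b * α a) * R3'
      · have hg : β ∉ Γ := fun h => hb (hmax α hαA (not_parallel (pair_symm h2)) ⟨β, h, hss3⟩)
        have hΓeq : Γ = ∅ := by
          apply Finset.eq_empty_iff_forall_notMem.2
          intro δ hδ
          rcases (hA δ).1 (hsub hδ) with rfl | rfl | rfl
          · exact hb hδ
          · exact hg hδ
          · exact hnm hδ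
        rw [hΓeq, Finset.sum_empty]
end
end

section
/- Let A be a trigonometric ∨-system of four pairwise non-collinear covectors α, β, γ, δ on ℂ² with nonzero multiplicities, which is irreducible. Then, after possibly replacing some covectors by their negatives and renaming, there is a covector α ∈ A such that the other three covectors all lie in a single α-series; moreover in a suitable basis the four covectors are e¹, e², e¹+e², e¹−e². -/
open scoped BigOperators

noncomputable section

namespace Aux


section Perms
variable {p q r s : Prop}
lemma perm1243 : (p ∨ q ∨ r ∨ s) ↔ (p ∨ q ∨ s ∨ r) := by tauto
lemma perm1324 : (p ∨ q ∨ r ∨ s) ↔ (p ∨ r ∨ q ∨ s) := by tauto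
lemma perm1342 : (p ∨ q ∨ r ∨ s) ↔ (p ∨ r ∨ s ∨ q) := by tauto
lemma perm1423 : (p ∨ q ∨ r ∨ s) ↔ (p ∨ s ∨ q ∨ r) := by tauto
lemma perm2134 : (p ∨ q ∨ r ∨ s) ↔ (q ∨ p ∨ r ∨ s) := by tauto
lemma perm2314 : (p ∨ q ∨ r ∨ s) ↔ (q ∨ r ∨ p ∨ s) := by tauto
lemma perm2413 : (p ∨ q ∨ r ∨ s) ↔ (q ∨ s ∨ p ∨ r) := by tauto
lemma perm3124 : (p ∨ q ∨ r ∨ s) ↔ (r ∨ p ∨ q ∨ s) := by tauto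
lemma perm3214 : (p ∨ q ∨ r ∨ s) ↔ (r ∨ q ∨ p ∨ s) := by tauto
lemma perm3412 : (p ∨ q ∨ r ∨ s) ↔ (r ∨ s ∨ p ∨ q) := by tauto
lemma perm3421 : (p ∨ q ∨ r ∨ s) ↔ (r ∨ s ∨ q ∨ p) := by tauto
lemma perm4123 : (p ∨ q ∨ r ∨ s) ↔ (s ∨ p ∨ q ∨ r) := by tauto
end Perms

def ee0 : V 2 := Pi.single 0 1
def ee1 : V 2 := Pi.single 1 1

lemma eval_eq (ξ : D 2) (x : V 2) : ξ x = x 0 * ξ ee0 + x 1 * ξ ee1 := by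
  have hx : x = x 0 • ee0 + x 1 • ee1 := by
    funext i
    fin_cases i <;> simp [ee0, ee1]
  conv_lhs => rw [hx]
  simp [map_add, map_smul, smul_eq_mul]

lemma ext2 {ξ η : D 2} (h0 : ξ ee0 = η ee0) (h1 : ξ ee1 = η ee1) : ξ = η := by
  apply LinearMap.ext; intro x
  rw [eval_eq ξ x, eval_eq η x, h0, h1]

lemma coeff_eq {x y : D 2} (h : LinearIndependent ℂ ![x, y]) {a b a' b' : ℂ}
    (hab : a • x + b • y = a' • x + b' • y) : a = a' ∧ b = b' := by
  have h0 : (a - a') • x + (b - b') • y = 0 := by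
    linear_combination (norm := module) hab
  obtain ⟨h1, h2⟩ := LinearIndependent.pair_iff.1 h _ _ h0
  exact ⟨sub_eq_zero.mp h1, sub_eq_zero.mp h2⟩


lemma det_ne {x y : D 2} (h : LinearIndependent ℂ ![x, y]) :
    x ee0 * y ee1 - x ee1 * y ee0 ≠ 0 := by
  intro hd
  have h1 : (y ee1) • x + (-(x ee1)) • y = (0:ℂ) • x + (0:ℂ) • y := by
    apply ext2 <;>
      simp only [LinearMap.add_apply, LinearMap.smul_apply, smul_eq_mul] <;>
      ring_nf <;> linear_combination hd
  have h2 : (y ee0) • x + (-(x ee0)) • y = (0:ℂ) • x + (0:ℂ) • y := by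
    apply ext2 <;>
      simp only [LinearMap.add_apply, LinearMap.smul_apply, smul_eq_mul] <;>
      ring_nf <;> linear_combination -hd
  obtain ⟨hy1, hx1⟩ := coeff_eq h h1
  obtain ⟨hy0, hx0⟩ := coeff_eq h h2
  have hx : x = 0 := ext2 (by simpa using hx0) (by simpa using hx1)
  have := (LinearIndependent.pair_iff.1 h 1 0 (by simp [hx])).1
  exact one_ne_zero this

lemma span2 {x y : D 2} (h : LinearIndependent ℂ ![x, y]) (ξ : D 2) :
    ∃ a b : ℂ, ξ = a • x + b • y := by
  have hd := det_ne h
  refine ⟨(ξ ee0 * y ee1 - ξ ee1 * y ee0) / (x ee0 * y ee1 - x ee1 * y ee0),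
          (x ee0 * ξ ee1 - x ee1 * ξ ee0) / (x ee0 * y ee1 - x ee1 * y ee0), ?_⟩
  apply ext2 <;>
    simp only [LinearMap.add_apply, LinearMap.smul_apply, smul_eq_mul] <;>
    rw [div_mul_eq_mul_div, div_mul_eq_mul_div, ← add_div, eq_div_iff hd] <;> ring

lemma vec_eq_zero {x y : D 2} (h : LinearIndependent ℂ ![x, y]) {v : V 2}
    (hx : x v = 0) (hy : y v = 0) : v = 0 := by
  have hd := det_ne h
  rw [eval_eq x v] at hx
  rw [eval_eq y v] at hy
  have h0 : v 0 * (x ee0 * y ee1 - x ee1 * y ee0) = 0 := by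
    linear_combination (y ee1) * hx - (x ee1) * hy
  have h1 : v 1 * (x ee0 * y ee1 - x ee1 * y ee0) = 0 := by
    linear_combination (x ee0) * hy - (y ee0) * hx
  have hv0 : v 0 = 0 := by rcases mul_eq_zero.1 h0 with h | h; exact h; exact absurd h hd
  have hv1 : v 1 = 0 := by rcases mul_eq_zero.1 h1 with h | h; exact h; exact absurd h hd
  funext i; fin_cases i <;> simpa [hv0, hv1]

lemma indep_of {w x : D 2} (hind : LinearIndependent ℂ ![w, x]) (f g : D 2)
    (p q r s : ℂ) (hf : f = p • w + q • x) (hg : g = r • w + s • x)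
    (hd : p * s - q * r ≠ 0) : LinearIndependent ℂ ![f, g] := by
  rw [LinearIndependent.pair_iff]
  intro u t h
  have h2 : (u * p + t * r) • w + (u * q + t * s) • x = (0:ℂ) • w + (0:ℂ) • x := by
    rw [hf, hg] at h
    linear_combination (norm := module) h
  obtain ⟨h3, h4⟩ := coeff_eq hind h2
  constructor
  · have : u * (p * s - q * r) = 0 := by linear_combination s * h3 - r * h4
    rcases mul_eq_zero.1 this with h | h; exact h; exact absurd h hd
  · have : t * (p * s - q * r) = 0 := by linear_combination p * h4 - q * h3
    rcases mul_eq_zero.1 this with h | h; exact h; exact absurd h hd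

lemma indep_symm {x y : D 2} (h : LinearIndependent ℂ ![x, y]) :
    LinearIndependent ℂ ![y, x] := by
  rw [LinearIndependent.pair_iff] at h ⊢
  intro s t hst
  obtain ⟨h1, h2⟩ := h t s (by linear_combination (norm := module) hst)
  exact ⟨h2, h1⟩

lemma ne_zero_left {x y : D 2} (h : LinearIndependent ℂ ![x, y]) : x ≠ 0 := by
  intro hx
  exact one_ne_zero (LinearIndependent.pair_iff.1 h 1 0 (by simp [hx])).1

lemma indep_ne {x y : D 2} (h : LinearIndependent ℂ ![x, y]) : x ≠ y := by
  intro he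
  exact one_ne_zero (LinearIndependent.pair_iff.1 h 1 (-1) (by rw [he]; module)).1

lemma not_parallel {w x : D 2} (h : LinearIndependent ℂ ![w, x]) : ¬ Parallel w x := by
  rintro ⟨t, ht⟩
  have := (LinearIndependent.pair_iff.1 h t (-1) (by rw [← ht]; module)).2
  norm_num at this

lemma parallel_self (w : D 2) : Parallel w w := ⟨1, (one_smul _ _).symm⟩

lemma sameSer_self (w x : D 2) : SameSer w x x := ⟨0, Or.inl (by simp)⟩

lemma sameSer_symm {w x y : D 2} (h : SameSer w x y) : SameSer w y x := by
  obtain ⟨m, h | h⟩ := h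
  · exact ⟨-m, Or.inl (by push_cast; rw [neg_smul, ← h]; abel)⟩
  · exact ⟨m, Or.inr (by rw [← h]; abel)⟩

lemma sameSer_smul_right {w x y : D 2} {σ : ℂ} (hσ : σ = 1 ∨ σ = -1) :
    SameSer w x (σ • y) ↔ SameSer w x y := by
  rcases hσ with h | h
  · rw [h, one_smul]
  · subst h
    constructor <;> rintro ⟨m, hh | hh⟩
    · exact ⟨m, Or.inr (by rw [← hh]; module)⟩
    · exact ⟨m, Or.inl (by rw [← hh]; module)⟩
    · exact ⟨m, Or.inr (by rw [← hh]; module)⟩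
    · exact ⟨m, Or.inl (by rw [← hh]; module)⟩

lemma sameSer_smul_mid {w x y : D 2} {σ : ℂ} (hσ : σ = 1 ∨ σ = -1) :
    SameSer w (σ • x) y ↔ SameSer w x y := by
  rcases hσ with h | h
  · rw [h, one_smul]
  · subst h
    constructor <;> rintro ⟨m, hh | hh⟩
    · exact ⟨-m, Or.inr (by push_cast; linear_combination (norm := module) -hh)⟩
    · exact ⟨-m, Or.inl (by push_cast; linear_combination (norm := module) -hh)⟩
    · exact ⟨-m, Or.inr (by push_cast; linear_combination (norm := module) -hh)⟩
    · exact ⟨-m, Or.inl (by push_cast; linear_combination (norm := module) -hh)⟩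

lemma sameSer_smul_base {w x y : D 2} {σ : ℂ} (hσ : σ = 1 ∨ σ = -1) :
    SameSer (σ • w) x y ↔ SameSer w x y := by
  rcases hσ with h | h
  · rw [h, one_smul]
  · subst h
    constructor <;> rintro ⟨m, hh | hh⟩
    · exact ⟨-m, Or.inl (by push_cast; linear_combination (norm := module) hh)⟩
    · exact ⟨-m, Or.inr (by push_cast; linear_combination (norm := module) hh)⟩
    · exact ⟨-m, Or.inl (by push_cast; linear_combination (norm := module) hh)⟩
    · exact ⟨-m, Or.inr (by push_cast; linear_combination (norm := module) hh)⟩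

lemma decode {w x : D 2} (hind : LinearIndependent ℂ ![w, x]) {u0 u1 u2 : D 2}
    {a b a1 b1 a2 b2 : ℂ}
    (h0 : u0 = a • w + b • x) (h1 : u1 = a1 • w + b1 • x) (h2 : u2 = a2 • w + b2 • x)
    (hss : SameSer u0 u1 u2) :
    ∃ m : ℤ, (a1 - a2 = m * a ∧ b1 - b2 = m * b) ∨ (a1 + a2 = m * a ∧ b1 + b2 = m * b) := by
  obtain ⟨m, hh | hh⟩ := hss
  · refine ⟨m, Or.inl ?_⟩
    rw [h0, h1, h2] at hh
    have h3 : (a1 - a2) • w + (b1 - b2) • x = ((m:ℂ) * a) • w + ((m:ℂ) * b) • x := by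
      linear_combination (norm := module) hh
    exact coeff_eq hind h3
  · refine ⟨m, Or.inr ?_⟩
    rw [h0, h1, h2] at hh
    have h3 : (a1 + a2) • w + (b1 + b2) • x = ((m:ℂ) * a) • w + ((m:ℂ) * b) • x := by
      linear_combination (norm := module) hh
    exact coeff_eq hind h3


lemma KL (A : Finset (D 2)) (c : D 2 → ℂ) (vee : D 2 → V 2)
    (hc : ∀ α ∈ A, c α ≠ 0)
    (hser : SeriesCond A c (fun ξ η => ξ (vee η)))
    {w u : D 2} (hw : w ∈ A) (hu : u ∈ A)
    (hind : LinearIndependent ℂ ![w, u])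
    (hiso : ∀ v ∈ A, ¬ Parallel w v → SameSer w v u → v = u) :
    w (vee u) = 0 := by
  classical
  have hIs : IsSeries A w {u} := by
    refine ⟨?_, ?_, ?_, ?_⟩
    · intro v hv; rw [Finset.mem_singleton] at hv; subst hv; exact hu
    · intro β hβ; rw [Finset.mem_singleton] at hβ; subst hβ; exact not_parallel hind
    · intro γ1 hγ1 γ2 hγ2
      rw [Finset.mem_singleton] at hγ1 hγ2; rw [hγ1, hγ2]
      exact sameSer_self w u
    · rintro β hβ hp ⟨γ, hγ, hss⟩
      rw [Finset.mem_singleton] at hγ; subst hγ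
      rw [Finset.mem_singleton]
      exact hiso β hβ hp hss
  have h := hser w hw {u} hIs ee0 ee1
  rw [Finset.sum_singleton] at h
  have hwne : wedge w u ee0 ee1 ≠ 0 := det_ne hind
  rcases mul_eq_zero.1 h with h' | h'
  · rcases mul_eq_zero.1 h' with h'' | h''
    · exact absurd h'' (hc u hu)
    · exact h''
  · exact absurd h' hwne

lemma ip_symm (A : Finset (D 2)) (c : D 2 → ℂ) (vee : D 2 → V 2)
    (hvee : ∀ ξ : D 2, ∀ v : V 2, Gform A c (vee ξ) v = ξ v) (ξ η : D 2) :
    ξ (vee η) = η (vee ξ) := by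
  rw [← hvee ξ (vee η), ← hvee η (vee ξ)]
  exact Finset.sum_congr rfl (fun α _ => by ring)

lemma kill (A : Finset (D 2)) (c : D 2 → ℂ) (vee : D 2 → V 2)
    (hvee : ∀ ξ : D 2, ∀ v : V 2, Gform A c (vee ξ) v = ξ v)
    {x x' y : D 2} (hind : LinearIndependent ℂ ![x, x'])
    (h1 : x (vee y) = 0) (h2 : x' (vee y) = 0) : y = 0 := by
  have hv : vee y = 0 := vec_eq_zero hind h1 h2
  apply LinearMap.ext; intro v
  rw [← hvee y v, hv]
  simp [Gform]

lemma VX (A : Finset (D 2)) (c : D 2 → ℂ) (vee : D 2 → V 2)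
    (hc : ∀ α ∈ A, c α ≠ 0)
    (hvee : ∀ ξ : D 2, ∀ v : V 2, Gform A c (vee ξ) v = ξ v)
    (hser : SeriesCond A c (fun ξ η => ξ (vee η)))
    {w u1 u2 u3 : D 2}
    (hw : w ∈ A) (h1 : u1 ∈ A) (h2 : u2 ∈ A) (h3 : u3 ∈ A)
    (hA : ∀ v ∈ A, v = w ∨ v = u1 ∨ v = u2 ∨ v = u3)
    (hw1 : LinearIndependent ℂ ![w, u1]) (hw2 : LinearIndependent ℂ ![w, u2])
    (h12 : LinearIndependent ℂ ![u1, u2]) :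
    SameSer w u1 u2 ∨ SameSer w u1 u3 ∨ SameSer w u2 u3 := by
  by_contra hcon
  push_neg at hcon
  obtain ⟨c1, c2, c3⟩ := hcon
  have iso1 : ∀ v ∈ A, ¬ Parallel w v → SameSer w v u1 → v = u1 := by
    intro v hv hp hss
    rcases hA v hv with rfl | rfl | rfl | rfl
    · exact absurd (parallel_self _) hp
    · rfl
    · exact absurd (sameSer_symm hss) c1
    · exact absurd (sameSer_symm hss) c2
  have iso2 : ∀ v ∈ A, ¬ Parallel w v → SameSer w v u2 → v = u2 := by
    intro v hv hp hss
    rcases hA v hv with rfl | rfl | rfl | rfl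
    · exact absurd (parallel_self _) hp
    · exact absurd hss c1
    · rfl
    · exact absurd (sameSer_symm hss) c3
  have k1 := KL A c vee hc hser hw h1 hw1 iso1
  have k2 := KL A c vee hc hser hw h2 hw2 iso2
  rw [ip_symm A c vee hvee w u1] at k1
  rw [ip_symm A c vee hvee w u2] at k2
  exact ne_zero_left hw1 (kill A c vee hvee h12 k1 k2)


def Concl (A : Finset (D 2)) : Prop :=
  ∃ s : D 2 → ℂ, (∀ β ∈ A, s β = 1 ∨ s β = -1) ∧
    ∃ A' : Finset (D 2), (∀ ξ, ξ ∈ A' ↔ ∃ β ∈ A, ξ = s β • β) ∧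
      (∃ α ∈ A', ∃ Γ : Finset (D 2), IsSeries A' α Γ ∧ ∀ ξ ∈ A', ξ ≠ α → ξ ∈ Γ) ∧
      ∃ f g : D 2, LinearIndependent ℂ ![f, g] ∧
        ∀ ξ, ξ ∈ A' ↔ (ξ = f ∨ ξ = g ∨ ξ = f + g ∨ ξ = f - g)

set_option maxHeartbeats 1000000 in
lemma FIN (A : Finset (D 2)) (x1 x2 x3 x4 f g : D 2) (σ1 σ2 σ3 σ4 : ℂ)
    (hA : ∀ v, v ∈ A ↔ (v = x1 ∨ v = x2 ∨ v = x3 ∨ v = x4))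
    (d12 : x1 ≠ x2) (d13 : x1 ≠ x3) (d14 : x1 ≠ x4)
    (d23 : x2 ≠ x3) (d24 : x2 ≠ x4) (d34 : x3 ≠ x4)
    (hσ1 : σ1 = 1 ∨ σ1 = -1) (hσ2 : σ2 = 1 ∨ σ2 = -1)
    (hσ3 : σ3 = 1 ∨ σ3 = -1) (hσ4 : σ4 = 1 ∨ σ4 = -1)
    (hfg : LinearIndependent ℂ ![f, g])
    (e1 : σ1 • x1 = f) (e2 : σ2 • x2 = g) (e3 : σ3 • x3 = f + g)
    (e4 : σ4 • x4 = f - g) : Concl A := by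
  classical
  refine ⟨fun ξ => if ξ = x1 then σ1 else if ξ = x2 then σ2 else
    if ξ = x3 then σ3 else if ξ = x4 then σ4 else 1, ?_, ?_⟩
  · intro β hβ
    rcases (hA β).1 hβ with rfl | rfl | rfl | rfl
    · simpa using hσ1
    · simp only [if_neg (Ne.symm d12), if_pos rfl]; exact hσ2
    · simp only [if_neg (Ne.symm d13), if_neg (Ne.symm d23), if_pos rfl]; exact hσ3
    · simp only [if_neg (Ne.symm d14), if_neg (Ne.symm d24), if_neg (Ne.symm d34),
        if_pos rfl]; exact hσ4
  · refine ⟨{f, g, f + g, f - g}, ?_, ?_, f, g, hfg, ?_⟩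
    · intro ξ
      simp only [Finset.mem_insert, Finset.mem_singleton]
      constructor
      · rintro (rfl | rfl | rfl | rfl)
        · exact ⟨x1, (hA x1).2 (Or.inl rfl), by simp only [if_pos rfl]; exact e1.symm⟩
        · exact ⟨x2, (hA x2).2 (Or.inr (Or.inl rfl)),
            by simp only [if_neg (Ne.symm d12), if_pos rfl]; exact e2.symm⟩
        · exact ⟨x3, (hA x3).2 (Or.inr (Or.inr (Or.inl rfl))),
            by simp only [if_neg (Ne.symm d13), if_neg (Ne.symm d23), if_pos rfl];
               exact e3.symm⟩
        · exact ⟨x4, (hA x4).2 (Or.inr (Or.inr (Or.inr rfl))),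
            by simp only [if_neg (Ne.symm d14), if_neg (Ne.symm d24),
                 if_neg (Ne.symm d34), if_pos rfl]; exact e4.symm⟩
      · rintro ⟨β, hβ, rfl⟩
        rcases (hA β).1 hβ with rfl | rfl | rfl | rfl
        · exact Or.inl (by simp only [if_pos rfl]; exact e1)
        · exact Or.inr (Or.inl (by simp only [if_neg (Ne.symm d12), if_pos rfl]; exact e2))
        · exact Or.inr (Or.inr (Or.inl (by
            simp only [if_neg (Ne.symm d13), if_neg (Ne.symm d23), if_pos rfl]; exact e3)))
        · exact Or.inr (Or.inr (Or.inr (by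
            simp only [if_neg (Ne.symm d14), if_neg (Ne.symm d24), if_neg (Ne.symm d34),
              if_pos rfl]; exact e4)))
    · refine ⟨f, by simp, {g, f + g, f - g}, ⟨?_, ?_, ?_, ?_⟩, ?_⟩
      · intro ξ hξ
        simp only [Finset.mem_insert, Finset.mem_singleton] at hξ ⊢
        tauto
      · intro β hβ
        simp only [Finset.mem_insert, Finset.mem_singleton] at hβ
        rcases hβ with rfl | rfl | rfl
        · exact not_parallel hfg
        · rintro ⟨t, ht⟩
          have := (LinearIndependent.pair_iff.1 hfg (t - 1) (-1)
            (by linear_combination (norm := module) -ht)).2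
          norm_num at this
        · rintro ⟨t, ht⟩
          have := (LinearIndependent.pair_iff.1 hfg (t - 1) 1
            (by linear_combination (norm := module) -ht)).2
          norm_num at this
      · intro γ1 h1 γ2 h2
        simp only [Finset.mem_insert, Finset.mem_singleton] at h1 h2
        rcases h1 with rfl | rfl | rfl <;> rcases h2 with rfl | rfl | rfl
        · exact sameSer_self _ _
        · exact ⟨-1, Or.inl (by push_cast; module)⟩
        · exact ⟨1, Or.inr (by push_cast; module)⟩
        · exact ⟨1, Or.inl (by push_cast; module)⟩
        · exact sameSer_self _ _
        · exact ⟨2, Or.inr (by push_cast; module)⟩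
        · exact ⟨1, Or.inr (by push_cast; module)⟩
        · exact ⟨2, Or.inr (by push_cast; module)⟩
        · exact sameSer_self _ _
      · intro β hβ hp _
        simp only [Finset.mem_insert, Finset.mem_singleton] at hβ ⊢
        rcases hβ with rfl | h
        · exact absurd (parallel_self β) hp
        · exact h
      · intro ξ hξ hne
        simp only [Finset.mem_insert, Finset.mem_singleton] at hξ ⊢
        tauto
    · intro ξ
      simp only [Finset.mem_insert, Finset.mem_singleton]


lemma half_eq {a b : D 2} (h : (2 : ℂ) • a = (2 : ℂ) • b) : a = b := by
  have h2 := congrArg (fun t : D 2 => (2⁻¹ : ℂ) • t) h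
  simp only [smul_smul] at h2
  norm_num at h2
  exact h2

lemma neg_pm {σ : ℂ} (h : σ = 1 ∨ σ = -1) : -σ = 1 ∨ -σ = -1 := by
  rcases h with rfl | rfl
  · right; norm_num
  · left; norm_num

set_option maxHeartbeats 1000000 in
lemma D1lem (A : Finset (D 2)) (c : D 2 → ℂ) (vee : D 2 → V 2)
    (hc : ∀ α ∈ A, c α ≠ 0)
    (hvee : ∀ ξ : D 2, ∀ v : V 2, Gform A c (vee ξ) v = ξ v)
    (hser : SeriesCond A c (fun ξ η => ξ (vee η)))
    {w x y z : D 2} {σy σz : ℂ} {p q : ℤ}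
    (hσy : σy = 1 ∨ σy = -1) (hσz : σz = 1 ∨ σz = -1)
    (hy : σy • y = x - (p : ℂ) • w) (hz : σz • z = x - (q : ℂ) • w)
    (hpq : p ≠ q)
    (hwA : w ∈ A) (hxA : x ∈ A) (hyA : y ∈ A) (hzA : z ∈ A)
    (hAx : ∀ v ∈ A, v = x ∨ v = w ∨ v = y ∨ v = z)
    (iwx : LinearIndependent ℂ ![w, x]) (ixw : LinearIndependent ℂ ![x, w])
    (ixy : LinearIndependent ℂ ![x, y]) (iwy : LinearIndependent ℂ ![w, y]) :
    p = 1 ∨ p = -1 ∨ q = 1 ∨ q = -1 ∨ p + q = 0 := by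
  have hxw : x = (0 : ℂ) • w + (1 : ℂ) • x := by module
  have hww : w = (1 : ℂ) • w + (0 : ℂ) • x := by module
  have hyc : x - (p : ℂ) • w = (-(p : ℂ)) • w + (1 : ℂ) • x := by module
  have hzc : x - (q : ℂ) • w = (-(q : ℂ)) • w + (1 : ℂ) • x := by module
  have vx := VX A c vee hc hvee hser hxA hwA hyA hzA hAx ixw ixy iwy
  rcases vx with hs | hs | hs
  · rw [← sameSer_smul_right hσy, hy] at hs
    obtain ⟨m, ⟨ha, _⟩ | ⟨ha, _⟩⟩ := decode iwx hxw hww hyc hs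
    · right; left
      exact_mod_cast (show (p : ℂ) = -1 by linear_combination ha)
    · left
      exact_mod_cast (show (p : ℂ) = 1 by linear_combination -ha)
  · rw [← sameSer_smul_right hσz, hz] at hs
    obtain ⟨m, ⟨ha, _⟩ | ⟨ha, _⟩⟩ := decode iwx hxw hww hzc hs
    · right; right; right; left
      exact_mod_cast (show (q : ℂ) = -1 by linear_combination ha)
    · right; right; left
      exact_mod_cast (show (q : ℂ) = 1 by linear_combination -ha)
  · rw [← sameSer_smul_mid hσy, hy, ← sameSer_smul_right hσz, hz] at hs
    obtain ⟨m, ⟨ha, _⟩ | ⟨ha, _⟩⟩ := decode iwx hxw hyc hzc hs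
    · exact absurd (by exact_mod_cast (show (p : ℂ) = (q : ℂ) by linear_combination -ha)) hpq
    · right; right; right; right
      exact_mod_cast (show (p : ℂ) + (q : ℂ) = 0 by linear_combination -ha)

set_option maxHeartbeats 1000000 in
lemma D2lem (A : Finset (D 2)) (c : D 2 → ℂ) (vee : D 2 → V 2)
    (hc : ∀ α ∈ A, c α ≠ 0)
    (hvee : ∀ ξ : D 2, ∀ v : V 2, Gform A c (vee ξ) v = ξ v)
    (hser : SeriesCond A c (fun ξ η => ξ (vee η)))
    {w x y z : D 2} {σy σz : ℂ} {p q : ℤ}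
    (hσy : σy = 1 ∨ σy = -1) (hσz : σz = 1 ∨ σz = -1)
    (hy : σy • y = x - (p : ℂ) • w) (hz : σz • z = x - (q : ℂ) • w)
    (hq0 : q ≠ 0)
    (hwA : w ∈ A) (hxA : x ∈ A) (hyA : y ∈ A) (hzA : z ∈ A)
    (hAy : ∀ v ∈ A, v = y ∨ v = w ∨ v = x ∨ v = z)
    (iwx : LinearIndependent ℂ ![w, x]) (iyw : LinearIndependent ℂ ![y, w])
    (iyx : LinearIndependent ℂ ![y, x]) :
    p = 1 ∨ p = -1 ∨ q = p - 1 ∨ q = p + 1 ∨ q = 2 * p := by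
  have hxw : x = (0 : ℂ) • w + (1 : ℂ) • x := by module
  have hww : w = (1 : ℂ) • w + (0 : ℂ) • x := by module
  have hyc : x - (p : ℂ) • w = (-(p : ℂ)) • w + (1 : ℂ) • x := by module
  have hzc : x - (q : ℂ) • w = (-(q : ℂ)) • w + (1 : ℂ) • x := by module
  have vy := VX A c vee hc hvee hser hyA hwA hxA hzA hAy iyw iyx iwx
  rcases vy with hs | hs | hs
  · rw [← sameSer_smul_base hσy, hy] at hs
    obtain ⟨m, ⟨ha, hb⟩ | ⟨ha, hb⟩⟩ := decode iwx hyc hww hxw hs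
    · have hm : m = -1 := by exact_mod_cast (show (m : ℂ) = -1 by linear_combination -hb)
      subst hm; push_cast at ha
      left; exact_mod_cast (show (p : ℂ) = 1 by linear_combination -ha)
    · have hm : m = 1 := by exact_mod_cast (show (m : ℂ) = 1 by linear_combination -hb)
      subst hm; push_cast at ha
      right; left; exact_mod_cast (show (p : ℂ) = -1 by linear_combination ha)
  · rw [← sameSer_smul_base hσy, hy, ← sameSer_smul_right hσz, hz] at hs
    obtain ⟨m, ⟨ha, hb⟩ | ⟨ha, hb⟩⟩ := decode iwx hyc hww hzc hs
    · have hm : m = -1 := by exact_mod_cast (show (m : ℂ) = -1 by linear_combination -hb)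
      subst hm; push_cast at ha
      right; right; left
      exact_mod_cast (show (q : ℂ) = (p : ℂ) - 1 by linear_combination ha)
    · have hm : m = 1 := by exact_mod_cast (show (m : ℂ) = 1 by linear_combination -hb)
      subst hm; push_cast at ha
      right; right; right; left
      exact_mod_cast (show (q : ℂ) = (p : ℂ) + 1 by linear_combination -ha)
  · rw [← sameSer_smul_base hσy, hy, ← sameSer_smul_right hσz, hz] at hs
    obtain ⟨m, ⟨ha, hb⟩ | ⟨ha, hb⟩⟩ := decode iwx hyc hxw hzc hs
    · have hm : m = 0 := by exact_mod_cast (show (m : ℂ) = 0 by linear_combination -hb)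
      subst hm; push_cast at ha
      exact absurd (by exact_mod_cast (show (q : ℂ) = 0 by linear_combination ha) : q = 0) hq0
    · have hm : m = 2 := by exact_mod_cast (show (m : ℂ) = 2 by linear_combination -hb)
      subst hm; push_cast at ha
      right; right; right; right
      exact_mod_cast (show (q : ℂ) = 2 * (p : ℂ) by linear_combination -ha)


set_option maxHeartbeats 1600000 in
lemma CB1 (A : Finset (D 2)) (w x y z : D 2)
    (hA : ∀ v, v ∈ A ↔ (v = w ∨ v = x ∨ v = y ∨ v = z))
    (dwx : w ≠ x) (dwy : w ≠ y) (dwz : w ≠ z) (dxy : x ≠ y) (dxz : x ≠ z) (dyz : y ≠ z)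
    (σy σz : ℂ) (hσy : σy = 1 ∨ σy = -1) (hσz : σz = 1 ∨ σz = -1)
    (iwx : LinearIndependent ℂ ![w, x])
    (hy : σy • y = x - w) (hz : σz • z = x + w) : Concl A :=
  FIN A w x z y w x 1 1 σz (-σy)
    (fun v => (hA v).trans perm1243) dwx dwz dwy dxz dxy (Ne.symm dyz)
    (Or.inl rfl) (Or.inl rfl) hσz (neg_pm hσy) iwx
    (one_smul _ _) (one_smul _ _)
    (by linear_combination (norm := module) hz)
    (by linear_combination (norm := module) -hy)

set_option maxHeartbeats 1600000 in
lemma CB3 (A : Finset (D 2)) (w x y z : D 2)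
    (hA : ∀ v, v ∈ A ↔ (v = w ∨ v = x ∨ v = y ∨ v = z))
    (dwx : w ≠ x) (dwy : w ≠ y) (dwz : w ≠ z) (dxy : x ≠ y) (dxz : x ≠ z) (dyz : y ≠ z)
    (σy σz : ℂ) (hσy : σy = 1 ∨ σy = -1) (hσz : σz = 1 ∨ σz = -1)
    (iwx : LinearIndependent ℂ ![w, x])
    (hy : σy • y = x - w) (hz : σz • z = x - (2:ℂ) • w) : Concl A :=
  FIN A w y x z w (x - w) 1 σy 1 (-σz)
    (fun v => (hA v).trans perm1324) dwy dwx dwz (Ne.symm dxy) dyz dxz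
    (Or.inl rfl) hσy (Or.inl rfl) (neg_pm hσz)
    (indep_of iwx w (x - w) 1 0 (-1) 1 (by module) (by module) (by norm_num))
    (one_smul _ _) hy
    (by module) (by linear_combination (norm := module) -hz)

set_option maxHeartbeats 1600000 in
lemma CB5 (A : Finset (D 2)) (w x y z : D 2)
    (hA : ∀ v, v ∈ A ↔ (v = w ∨ v = x ∨ v = y ∨ v = z))
    (dwx : w ≠ x) (dwy : w ≠ y) (dwz : w ≠ z) (dxy : x ≠ y) (dxz : x ≠ z) (dyz : y ≠ z)
    (σy σz : ℂ) (hσy : σy = 1 ∨ σy = -1) (hσz : σz = 1 ∨ σz = -1)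
    (iwx : LinearIndependent ℂ ![w, x])
    (hy : σy • y = x + w) (hz : σz • z = x + (2:ℂ) • w) : Concl A :=
  FIN A w y z x w (x + w) 1 σy σz (-1)
    (fun v => (hA v).trans perm1342) dwy dwz dwx dyz (Ne.symm dxy) (Ne.symm dxz)
    (Or.inl rfl) hσy hσz (Or.inr rfl)
    (indep_of iwx w (x + w) 1 0 1 1 (by module) (by module) (by norm_num))
    (one_smul _ _) hy
    (by linear_combination (norm := module) hz) (by module)

set_option maxHeartbeats 1600000 in
lemma CTAIL (A : Finset (D 2)) (w x y z : D 2)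
    (hA : ∀ v, v ∈ A ↔ (v = w ∨ v = x ∨ v = y ∨ v = z))
    (dwx : w ≠ x) (dwy : w ≠ y) (dwz : w ≠ z) (dxy : x ≠ y) (dxz : x ≠ z) (dyz : y ≠ z)
    (σy σz : ℂ) (hσy : σy = 1 ∨ σy = -1) (hσz : σz = 1 ∨ σz = -1)
    (iwx : LinearIndependent ℂ ![w, x]) (p q : ℤ)
    (hy : σy • y = x - (p : ℂ) • w) (hz : σz • z = x - (q : ℂ) • w)
    (hcases : (p = 1 ∧ q = -1) ∨ (p = -1 ∧ q = 1) ∨ (p = 1 ∧ q = 2) ∨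
      (p = 2 ∧ q = 1) ∨ (p = -1 ∧ q = -2) ∨ (p = -2 ∧ q = -1)) : Concl A := by
  rcases hcases with ⟨rfl, rfl⟩ | ⟨rfl, rfl⟩ | ⟨rfl, rfl⟩ | ⟨rfl, rfl⟩ | ⟨rfl, rfl⟩ | ⟨rfl, rfl⟩
  · exact CB1 A w x y z hA dwx dwy dwz dxy dxz dyz σy σz hσy hσz iwx
      (by push_cast at hy; linear_combination (norm := module) hy)
      (by push_cast at hz; linear_combination (norm := module) hz)
  · exact CB1 A w x z y (fun v => (hA v).trans perm1243) dwx dwz dwy dxz dxy (Ne.symm dyz)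
      σz σy hσz hσy iwx
      (by push_cast at hz; linear_combination (norm := module) hz)
      (by push_cast at hy; linear_combination (norm := module) hy)
  · exact CB3 A w x y z hA dwx dwy dwz dxy dxz dyz σy σz hσy hσz iwx
      (by push_cast at hy; linear_combination (norm := module) hy)
      (by push_cast at hz; linear_combination (norm := module) hz)
  · exact CB3 A w x z y (fun v => (hA v).trans perm1243) dwx dwz dwy dxz dxy (Ne.symm dyz)
      σz σy hσz hσy iwx
      (by push_cast at hz; linear_combination (norm := module) hz)
      (by push_cast at hy; linear_combination (norm := module) hy)
  · exact CB5 A w x y z hA dwx dwy dwz dxy dxz dyz σy σz hσy hσz iwx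
      (by push_cast at hy; linear_combination (norm := module) hy)
      (by push_cast at hz; linear_combination (norm := module) hz)
  · exact CB5 A w x z y (fun v => (hA v).trans perm1243) dwx dwz dwy dxz dxy (Ne.symm dyz)
      σz σy hσz hσy iwx
      (by push_cast at hz; linear_combination (norm := module) hz)
      (by push_cast at hy; linear_combination (norm := module) hy)

set_option maxHeartbeats 1600000 in
lemma CASEI (A : Finset (D 2)) (c : D 2 → ℂ) (vee : D 2 → V 2)
    (hc : ∀ α ∈ A, c α ≠ 0)
    (hvee : ∀ ξ : D 2, ∀ v : V 2, Gform A c (vee ξ) v = ξ v)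
    (hser : SeriesCond A c (fun ξ η => ξ (vee η)))
    (w x y z : D 2)
    (hA : ∀ v, v ∈ A ↔ (v = w ∨ v = x ∨ v = y ∨ v = z))
    (dwx : w ≠ x) (dwy : w ≠ y) (dwz : w ≠ z) (dxy : x ≠ y) (dxz : x ≠ z) (dyz : y ≠ z)
    (hpnc : ∀ α ∈ A, ∀ β ∈ A, α ≠ β → LinearIndependent ℂ ![α, β])
    (h1 : SameSer w x y) (h2 : SameSer w x z) : Concl A := by
  have hwA : w ∈ A := (hA w).2 (Or.inl rfl)
  have hxA : x ∈ A := (hA x).2 (Or.inr (Or.inl rfl))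
  have hyA : y ∈ A := (hA y).2 (Or.inr (Or.inr (Or.inl rfl)))
  have hzA : z ∈ A := (hA z).2 (Or.inr (Or.inr (Or.inr rfl)))
  have iwx := hpnc w hwA x hxA dwx
  have iwy := hpnc w hwA y hyA dwy
  have iwz := hpnc w hwA z hzA dwz
  have ixy := hpnc x hxA y hyA dxy
  have ixz := hpnc x hxA z hzA dxz
  have ixw := indep_symm iwx
  have iyw := indep_symm iwy
  have izw := indep_symm iwz
  have iyx := indep_symm ixy
  have izx := indep_symm ixz
  -- extract sign/integer data
  have EY : ∃ σ : ℂ, (σ = 1 ∨ σ = -1) ∧ ∃ p : ℤ, σ • y = x - (p : ℂ) • w := by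
    obtain ⟨p, hp | hp⟩ := h1
    · exact ⟨1, Or.inl rfl, p, by linear_combination (norm := module) -hp⟩
    · exact ⟨-1, Or.inr rfl, p, by linear_combination (norm := module) -hp⟩
  have EZ : ∃ σ : ℂ, (σ = 1 ∨ σ = -1) ∧ ∃ q : ℤ, σ • z = x - (q : ℂ) • w := by
    obtain ⟨q, hq | hq⟩ := h2
    · exact ⟨1, Or.inl rfl, q, by linear_combination (norm := module) -hq⟩
    · exact ⟨-1, Or.inr rfl, q, by linear_combination (norm := module) -hq⟩
  obtain ⟨σy, hσy, p, hy⟩ := EY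
  obtain ⟨σz, hσz, q, hz⟩ := EZ
  have hσy0 : σy ≠ 0 := by rcases hσy with rfl | rfl <;> norm_num
  have hσz0 : σz ≠ 0 := by rcases hσz with rfl | rfl <;> norm_num
  have hp0 : p ≠ 0 := by
    rintro rfl
    push_cast at hy
    have h0 : (1 : ℂ) • x + (-σy) • y = 0 := by linear_combination (norm := module) -hy
    exact one_ne_zero ((LinearIndependent.pair_iff.1 ixy) 1 (-σy) h0).1
  have hq0 : q ≠ 0 := by
    rintro rfl
    push_cast at hz
    have h0 : (1 : ℂ) • x + (-σz) • z = 0 := by linear_combination (norm := module) -hz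
    exact one_ne_zero ((LinearIndependent.pair_iff.1 ixz) 1 (-σz) h0).1
  have hpq : p ≠ q := by
    intro hpq
    subst hpq
    have h0 : σy • y + (-σz) • z = 0 := by
      rw [← hz] at hy
      linear_combination (norm := module) hy
    obtain ⟨hh, _⟩ := (LinearIndependent.pair_iff.1 (hpnc y hyA z hzA dyz)) σy (-σz) h0
    exact hσy0 hh
  have D1 : p = 1 ∨ p = -1 ∨ q = 1 ∨ q = -1 ∨ p + q = 0 :=
    D1lem A c vee hc hvee hser hσy hσz hy hz hpq hwA hxA hyA hzA
      (fun v hv => perm2134.1 ((hA v).1 hv)) iwx ixw ixy iwy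
  have D2 : p = 1 ∨ p = -1 ∨ q = p - 1 ∨ q = p + 1 ∨ q = 2 * p :=
    D2lem A c vee hc hvee hser hσy hσz hy hz hq0 hwA hxA hyA hzA
      (fun v hv => perm3124.1 ((hA v).1 hv)) iwx iyw iyx
  have D3 : q = 1 ∨ q = -1 ∨ p = q - 1 ∨ p = q + 1 ∨ p = 2 * q :=
    D2lem A c vee hc hvee hser hσz hσy hz hy hp0 hwA hxA hzA hyA
      (fun v hv => perm4123.1 ((hA v).1 hv)) iwx izw izx
  have hcases : (p = 1 ∧ q = -1) ∨ (p = -1 ∧ q = 1) ∨ (p = 1 ∧ q = 2) ∨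
      (p = 2 ∧ q = 1) ∨ (p = -1 ∧ q = -2) ∨ (p = -2 ∧ q = -1) := by omega
  exact CTAIL A w x y z hA dwx dwy dwz dxy dxz dyz σy σz hσy hσz iwx p q hy hz hcases

set_option maxHeartbeats 1600000 in
lemma CC2 (A : Finset (D 2)) (w b u v : D 2)
    (hA : ∀ ξ, ξ ∈ A ↔ (ξ = w ∨ ξ = b ∨ ξ = u ∨ ξ = v))
    (dwb : w ≠ b) (dwu : w ≠ u) (dwv : w ≠ v) (dbu : b ≠ u) (dbv : b ≠ v) (duv : u ≠ v)
    (τu τv : ℂ) (hτu : τu = 1 ∨ τu = -1) (hτv : τv = 1 ∨ τv = -1)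
    (iwb : LinearIndependent ℂ ![w, b])
    (hu : τu • u = w + b) (hv : τv • v = w - b) : Concl A :=
  FIN A w b u v w b 1 1 τu τv hA dwb dwu dwv dbu dbv duv
    (Or.inl rfl) (Or.inl rfl) hτu hτv iwb (one_smul _ _) (one_smul _ _) hu hv

set_option maxHeartbeats 1600000 in
lemma CC1 (A : Finset (D 2)) (w b u v : D 2)
    (hA : ∀ ξ, ξ ∈ A ↔ (ξ = w ∨ ξ = b ∨ ξ = u ∨ ξ = v))
    (dwb : w ≠ b) (dwu : w ≠ u) (dwv : w ≠ v) (dbu : b ≠ u) (dbv : b ≠ v) (duv : u ≠ v)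
    (τu τv : ℂ) (hτu : τu = 1 ∨ τu = -1) (hτv : τv = 1 ∨ τv = -1)
    (iwb : LinearIndependent ℂ ![w, b])
    (hu : τu • u = (1/2 : ℂ) • w + (1/2 : ℂ) • b)
    (hv : τv • v = (1/2 : ℂ) • w - (1/2 : ℂ) • b) : Concl A :=
  FIN A u v w b ((1/2 : ℂ) • w + (1/2 : ℂ) • b) ((1/2 : ℂ) • w - (1/2 : ℂ) • b) τu τv 1 1
    (fun ξ => (hA ξ).trans perm3412)
    duv (Ne.symm dwu) (Ne.symm dbu) (Ne.symm dwv) (Ne.symm dbv) dwb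
    hτu hτv (Or.inl rfl) (Or.inl rfl)
    (indep_of iwb _ _ (1/2) (1/2) (1/2) (-(1/2)) rfl (by module) (by norm_num))
    hu hv (by module) (by module)

set_option maxHeartbeats 4000000 in
lemma ALG (A : Finset (D 2)) (w b u v : D 2)
    (hA : ∀ ξ, ξ ∈ A ↔ (ξ = w ∨ ξ = b ∨ ξ = u ∨ ξ = v))
    (dwb : w ≠ b) (dwu : w ≠ u) (dwv : w ≠ v) (dbu : b ≠ u) (dbv : b ≠ v) (duv : u ≠ v)
    (iwb : LinearIndependent ℂ ![w, b])
    (σ : ℂ) (hσ : σ = 1 ∨ σ = -1) (m m' : ℤ)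
    (hm : u - σ • v = (m : ℂ) • w) (hm' : u + σ • v = (m' : ℂ) • b)
    (ht : SameSer u w b) : Concl A := by
  have h2g : (2 : ℂ) • u = (m : ℂ) • w + (m' : ℂ) • b := by
    linear_combination (norm := module) hm + hm'
  have h2d : (2 : ℂ) • (σ • v) = (m' : ℂ) • b - (m : ℂ) • w := by
    linear_combination (norm := module) hm' - hm
  have two_ne : (2 : ℂ) ≠ 0 := by norm_num
  obtain ⟨k, hk | hk⟩ := ht
  · -- w - b = k • u,  so 2 = k m and -2 = k m'
    have h9 := congrArg (fun t : D 2 => (2 : ℂ) • t) hk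
    simp only [smul_smul] at h9
    rw [mul_comm (2 : ℂ) (k : ℂ), ← smul_smul, h2g] at h9
    have hcoef : (2 : ℂ) • w + (-2 : ℂ) • b = ((k : ℂ) * (m : ℂ)) • w + ((k : ℂ) * (m' : ℂ)) • b := by
      linear_combination (norm := module) h9
    obtain ⟨E1, E2⟩ := coeff_eq iwb hcoef
    have E1' : (2 : ℤ) = k * m := by exact_mod_cast E1
    have E2' : (-2 : ℤ) = k * m' := by exact_mod_cast E2
    have hdvd : m ∣ 2 := ⟨k, by linear_combination E1'⟩
    have hna : m.natAbs ∣ 2 := by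
      have := Int.natAbs_dvd_natAbs.mpr hdvd
      simpa using this
    have hle : m.natAbs ≤ 2 := Nat.le_of_dvd (by norm_num) hna
    have hm0 : m ≠ 0 := by rintro rfl; simp at E1'
    have hm4 : m = 1 ∨ m = -1 ∨ m = 2 ∨ m = -2 := by omega
    rcases hm4 with rfl | rfl | rfl | rfl
    · obtain rfl : k = 2 := by omega
      obtain rfl : m' = -1 := by omega
      push_cast at h2g h2d
      refine CC1 A w b v u (fun ξ => (hA ξ).trans perm1243)
        dwb dwv dwu dbv dbu (Ne.symm duv) (-σ) 1 (neg_pm hσ) (Or.inl rfl) iwb ?_ ?_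
      · exact half_eq (by linear_combination (norm := module) -h2d)
      · exact half_eq (by linear_combination (norm := module) h2g)
    · obtain rfl : k = -2 := by omega
      obtain rfl : m' = 1 := by omega
      push_cast at h2g h2d
      refine CC1 A w b v u (fun ξ => (hA ξ).trans perm1243)
        dwb dwv dwu dbv dbu (Ne.symm duv) σ (-1) hσ (Or.inr rfl) iwb ?_ ?_
      · exact half_eq (by linear_combination (norm := module) h2d)
      · exact half_eq (by linear_combination (norm := module) -h2g)
    · obtain rfl : k = 1 := by omega
      obtain rfl : m' = -2 := by omega
      push_cast at h2g h2d
      refine CC2 A w b v u (fun ξ => (hA ξ).trans perm1243)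
        dwb dwv dwu dbv dbu (Ne.symm duv) (-σ) 1 (neg_pm hσ) (Or.inl rfl) iwb ?_ ?_
      · exact half_eq (by linear_combination (norm := module) -h2d)
      · exact half_eq (by linear_combination (norm := module) h2g)
    · obtain rfl : k = -1 := by omega
      obtain rfl : m' = 2 := by omega
      push_cast at h2g h2d
      refine CC2 A w b v u (fun ξ => (hA ξ).trans perm1243)
        dwb dwv dwu dbv dbu (Ne.symm duv) σ (-1) hσ (Or.inr rfl) iwb ?_ ?_
      · exact half_eq (by linear_combination (norm := module) h2d)
      · exact half_eq (by linear_combination (norm := module) -h2g)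
  · -- w + b = k • u,  so 2 = k m and 2 = k m'
    have h9 := congrArg (fun t : D 2 => (2 : ℂ) • t) hk
    simp only [smul_smul] at h9
    rw [mul_comm (2 : ℂ) (k : ℂ), ← smul_smul, h2g] at h9
    have hcoef : (2 : ℂ) • w + (2 : ℂ) • b = ((k : ℂ) * (m : ℂ)) • w + ((k : ℂ) * (m' : ℂ)) • b := by
      linear_combination (norm := module) h9
    obtain ⟨E1, E2⟩ := coeff_eq iwb hcoef
    have E1' : (2 : ℤ) = k * m := by exact_mod_cast E1
    have E2' : (2 : ℤ) = k * m' := by exact_mod_cast E2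
    have hdvd : m ∣ 2 := ⟨k, by linear_combination E1'⟩
    have hna : m.natAbs ∣ 2 := by
      have := Int.natAbs_dvd_natAbs.mpr hdvd
      simpa using this
    have hle : m.natAbs ≤ 2 := Nat.le_of_dvd (by norm_num) hna
    have hm0 : m ≠ 0 := by rintro rfl; simp at E1'
    have hm4 : m = 1 ∨ m = -1 ∨ m = 2 ∨ m = -2 := by omega
    rcases hm4 with rfl | rfl | rfl | rfl
    · obtain rfl : k = 2 := by omega
      obtain rfl : m' = 1 := by omega
      push_cast at h2g h2d
      refine CC1 A w b u v hA dwb dwu dwv dbu dbv duv 1 (-σ) (Or.inl rfl) (neg_pm hσ) iwb ?_ ?_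
      · exact half_eq (by linear_combination (norm := module) h2g)
      · exact half_eq (by linear_combination (norm := module) -h2d)
    · obtain rfl : k = -2 := by omega
      obtain rfl : m' = -1 := by omega
      push_cast at h2g h2d
      refine CC1 A w b u v hA dwb dwu dwv dbu dbv duv (-1) σ (Or.inr rfl) hσ iwb ?_ ?_
      · exact half_eq (by linear_combination (norm := module) -h2g)
      · exact half_eq (by linear_combination (norm := module) h2d)
    · obtain rfl : k = 1 := by omega
      obtain rfl : m' = 2 := by omega
      push_cast at h2g h2d
      refine CC2 A w b u v hA dwb dwu dwv dbu dbv duv 1 (-σ) (Or.inl rfl) (neg_pm hσ) iwb ?_ ?_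
      · exact half_eq (by linear_combination (norm := module) h2g)
      · exact half_eq (by linear_combination (norm := module) -h2d)
    · obtain rfl : k = -1 := by omega
      obtain rfl : m' = -2 := by omega
      push_cast at h2g h2d
      refine CC2 A w b u v hA dwb dwu dwv dbu dbv duv (-1) σ (Or.inr rfl) hσ iwb ?_ ?_
      · exact half_eq (by linear_combination (norm := module) -h2g)
      · exact half_eq (by linear_combination (norm := module) h2d)

set_option maxHeartbeats 4000000 in
lemma MAIN (A : Finset (D 2)) (c : D 2 → ℂ) (vee : D 2 → V 2)
    (hc : ∀ α ∈ A, c α ≠ 0)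
    (hvee : ∀ ξ : D 2, ∀ v : V 2, Gform A c (vee ξ) v = ξ v)
    (hser : SeriesCond A c (fun ξ η => ξ (vee η)))
    (w b u v : D 2)
    (hA : ∀ ξ, ξ ∈ A ↔ (ξ = w ∨ ξ = b ∨ ξ = u ∨ ξ = v))
    (dwb : w ≠ b) (dwu : w ≠ u) (dwv : w ≠ v) (dbu : b ≠ u) (dbv : b ≠ v) (duv : u ≠ v)
    (hpnc : ∀ α ∈ A, ∀ β ∈ A, α ≠ β → LinearIndependent ℂ ![α, β])
    (hedge : SameSer w u v) : Concl A := by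
  classical
  have hwA : w ∈ A := (hA w).2 (Or.inl rfl)
  have hbA : b ∈ A := (hA b).2 (Or.inr (Or.inl rfl))
  have huA : u ∈ A := (hA u).2 (Or.inr (Or.inr (Or.inl rfl)))
  have hvA : v ∈ A := (hA v).2 (Or.inr (Or.inr (Or.inr rfl)))
  have iwb := hpnc w hwA b hbA dwb
  have iwu := hpnc w hwA u huA dwu
  have iwv := hpnc w hwA v hvA dwv
  have ibu := hpnc b hbA u huA dbu
  have ibv := hpnc b hbA v hvA dbv
  have iuv := hpnc u huA v hvA duv
  have ibw := indep_symm iwb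
  have iub := indep_symm ibu
  have iuw := indep_symm iwu
  by_cases h1 : SameSer w b u
  · exact CASEI A c vee hc hvee hser w u b v (fun ξ => (hA ξ).trans perm1324)
      dwu dwb dwv (Ne.symm dbu) duv dbv hpnc (sameSer_symm h1) hedge
  by_cases h2 : SameSer w b v
  · exact CASEI A c vee hc hvee hser w v b u (fun ξ => (hA ξ).trans perm1423)
      dwv dwb dwu (Ne.symm dbv) (Ne.symm duv) dbu hpnc (sameSer_symm h2) (sameSer_symm hedge)
  have kwb : w (vee b) = 0 := by
    refine KL A c vee hc hser hwA hbA iwb ?_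
    intro ξ hξ hp hss
    rcases (hA ξ).1 hξ with rfl | rfl | rfl | rfl
    · exact absurd (parallel_self _) hp
    · rfl
    · exact absurd (sameSer_symm hss) h1
    · exact absurd (sameSer_symm hss) h2
  have vb := VX A c vee hc hvee hser hbA hwA huA hvA
    (fun ξ hξ => perm2134.1 ((hA ξ).1 hξ)) ibw ibu iwu
  rcases vb with hs | hs | hs
  · by_cases h3 : SameSer b w v
    · exact CASEI A c vee hc hvee hser b w u v (fun ξ => (hA ξ).trans perm2134)
        (Ne.symm dwb) dbu dbv dwu dwv duv hpnc hs h3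
    by_cases h4 : SameSer b u v
    · exact CASEI A c vee hc hvee hser b u w v (fun ξ => (hA ξ).trans perm2314)
        dbu (Ne.symm dwb) dbv (Ne.symm dwu) duv dwv hpnc (sameSer_symm hs) h4
    have kbv : b (vee v) = 0 := by
      refine KL A c vee hc hser hbA hvA ibv ?_
      intro ξ hξ hp hss
      rcases (hA ξ).1 hξ with rfl | rfl | rfl | rfl
      · exact absurd hss h3
      · exact absurd (parallel_self _) hp
      · exact absurd hss h4
      · rfl
    have kvb : v (vee b) = 0 := by rw [ip_symm A c vee hvee]; exact kbv
    exact absurd (kill A c vee hvee iwv kwb kvb) (ne_zero_left ibw)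
  · by_cases h3 : SameSer b w u
    · exact CASEI A c vee hc hvee hser b w u v (fun ξ => (hA ξ).trans perm2134)
        (Ne.symm dwb) dbu dbv dwu dwv duv hpnc h3 hs
    by_cases h4 : SameSer b u v
    · exact CASEI A c vee hc hvee hser b v w u (fun ξ => (hA ξ).trans perm2413)
        dbv (Ne.symm dwb) dbu (Ne.symm dwv) (Ne.symm duv) dwu hpnc (sameSer_symm hs)
        (sameSer_symm h4)
    have kbu : b (vee u) = 0 := by
      refine KL A c vee hc hser hbA huA ibu ?_
      intro ξ hξ hp hss
      rcases (hA ξ).1 hξ with rfl | rfl | rfl | rfl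
      · exact absurd hss h3
      · exact absurd (parallel_self _) hp
      · rfl
      · exact absurd (sameSer_symm hss) h4
    have kub : u (vee b) = 0 := by rw [ip_symm A c vee hvee]; exact kbu
    exact absurd (kill A c vee hvee iwu kwb kub) (ne_zero_left ibw)
  · have vu := VX A c vee hc hvee hser huA hwA hbA hvA
      (fun ξ hξ => perm3124.1 ((hA ξ).1 hξ)) iuw iub iwb
    rcases vu with ht | ht | ht
    · obtain ⟨σ, hσ, m, hm⟩ : ∃ σ : ℂ, (σ = 1 ∨ σ = -1) ∧ ∃ m : ℤ, u - σ • v = (m : ℂ) • w := by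
        obtain ⟨m, h | h⟩ := hedge
        · exact ⟨1, Or.inl rfl, m, by linear_combination (norm := module) h⟩
        · exact ⟨-1, Or.inr rfl, m, by linear_combination (norm := module) h⟩
      obtain ⟨τ, hτ, m', hm'⟩ : ∃ τ : ℂ, (τ = 1 ∨ τ = -1) ∧ ∃ m' : ℤ, u - τ • v = (m' : ℂ) • b := by
        obtain ⟨m', h | h⟩ := hs
        · exact ⟨1, Or.inl rfl, m', by linear_combination (norm := module) h⟩
        · exact ⟨-1, Or.inr rfl, m', by linear_combination (norm := module) h⟩
      by_cases hστ : σ = τ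
      · rw [← hστ] at hm'
        have h0 : (m : ℂ) • w + (0 : ℂ) • b = (0 : ℂ) • w + (m' : ℂ) • b := by
          linear_combination (norm := module) hm' - hm
        have hm00 := (coeff_eq iwb h0).1
        rw [hm00, zero_smul] at hm
        have hx0 : (1 : ℂ) • u + (-σ) • v = 0 := by
          linear_combination (norm := module) hm
        exact absurd ((LinearIndependent.pair_iff.1 iuv 1 (-σ) hx0).1) one_ne_zero
      · have hτσ : τ = -σ := by
          rcases hσ with rfl | rfl
          · rcases hτ with rfl | rfl
            · exact absurd rfl hστ
            · norm_num
          · rcases hτ with rfl | rfl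
            · norm_num
            · exact absurd rfl hστ
        rw [hτσ] at hm'
        have hm'' : u + σ • v = (m' : ℂ) • b := by linear_combination (norm := module) hm'
        exact ALG A w b u v hA dwb dwu dwv dbu dbv duv iwb σ hσ m m' hm hm'' ht
    · by_cases h3 : SameSer u w b
      · exact CASEI A c vee hc hvee hser u w b v (fun ξ => (hA ξ).trans perm3124)
          (Ne.symm dwu) (Ne.symm dbu) duv dwb dwv dbv hpnc h3 ht
      by_cases h4 : SameSer u b v
      · exact CASEI A c vee hc hvee hser u v w b (fun ξ => (hA ξ).trans perm3412)
          duv (Ne.symm dwu) (Ne.symm dbu) (Ne.symm dwv) (Ne.symm dbv) dwb hpnc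
          (sameSer_symm ht) (sameSer_symm h4)
      have kub2 : u (vee b) = 0 := by
        refine KL A c vee hc hser huA hbA iub ?_
        intro ξ hξ hp hss
        rcases (hA ξ).1 hξ with rfl | rfl | rfl | rfl
        · exact absurd hss h3
        · rfl
        · exact absurd (parallel_self _) hp
        · exact absurd (sameSer_symm hss) h4
      exact absurd (kill A c vee hvee iwu kwb kub2) (ne_zero_left ibw)
    · by_cases h3 : SameSer u w b
      · exact CASEI A c vee hc hvee hser u b w v (fun ξ => (hA ξ).trans perm3214)
          (Ne.symm dbu) (Ne.symm dwu) duv (Ne.symm dwb) dbv dwv hpnc (sameSer_symm h3) ht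
      by_cases h4 : SameSer u w v
      · exact CASEI A c vee hc hvee hser u v b w (fun ξ => (hA ξ).trans perm3421)
          duv (Ne.symm dbu) (Ne.symm dwu) (Ne.symm dbv) (Ne.symm dwv) (Ne.symm dwb) hpnc
          (sameSer_symm ht) (sameSer_symm h4)
      have kuw : u (vee w) = 0 := by
        refine KL A c vee hc hser huA hwA iuw ?_
        intro ξ hξ hp hss
        rcases (hA ξ).1 hξ with rfl | rfl | rfl | rfl
        · rfl
        · exact absurd (sameSer_symm hss) h3
        · exact absurd (parallel_self _) hp
        · exact absurd (sameSer_symm hss) h4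
      have kbw : b (vee w) = 0 := by rw [ip_symm A c vee hvee]; exact kwb
      exact absurd (kill A c vee hvee iub kuw kbw) (ne_zero_left iwb)

lemma card4 {α : Type*} [DecidableEq α] {A : Finset α} (h : A.card = 4) :
    ∃ a b c d : α, a ≠ b ∧ a ≠ c ∧ a ≠ d ∧ b ≠ c ∧ b ≠ d ∧ c ≠ d ∧
      ∀ v, v ∈ A ↔ (v = a ∨ v = b ∨ v = c ∨ v = d) := by
  obtain ⟨a, t, hat, rfl, ht3⟩ := Finset.card_eq_succ.1 (show A.card = 3 + 1 from h)
  obtain ⟨b, c, d, hbc, hbd, hcd, rfl⟩ := Finset.card_eq_three.1 ht3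
  simp only [Finset.mem_insert, Finset.mem_singleton] at hat
  push_neg at hat
  exact ⟨a, b, c, d, hat.1, hat.2.1, hat.2.2, hbc, hbd, hcd,
    fun v => by simp [Finset.mem_insert, Finset.mem_singleton]⟩

end Aux

set_option maxHeartbeats 1000000

/-- geometric core of Proposition 3: an irreducible trigonometric
∨-system of four pairwise non-collinear covectors has, after negating some covectors,
one covector whose single series contains the other three, and in a suitable basis
the covectors are `e¹, e², e¹+e², e¹−e²`. -/
theorem four_covectors_structure (A : Finset (D 2)) (hcard : A.card = 4)
    (hpnc : ∀ α ∈ A, ∀ β ∈ A, α ≠ β → LinearIndependent ℂ ![α, β])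
    (c : D 2 → ℂ) (hc : ∀ α ∈ A, c α ≠ 0)
    (hlat : InLattice A)
    (hnd : NonDeg (Gform A c))
    (vee : D 2 → V 2) (hvee : ∀ ξ : D 2, ∀ v : V 2, Gform A c (vee ξ) v = ξ v)
    (hser : SeriesCond A c (fun ξ η => ξ (vee η)))
    (hirr : Irred A) :
    ∃ s : D 2 → ℂ, (∀ β ∈ A, s β = 1 ∨ s β = -1) ∧
      ∃ A' : Finset (D 2), (∀ ξ, ξ ∈ A' ↔ ∃ β ∈ A, ξ = s β • β) ∧
        (∃ α ∈ A', ∃ Γ : Finset (D 2), IsSeries A' α Γ ∧ ∀ ξ ∈ A', ξ ≠ α → ξ ∈ Γ) ∧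
        ∃ f g : D 2, LinearIndependent ℂ ![f, g] ∧
          ∀ ξ, ξ ∈ A' ↔ (ξ = f ∨ ξ = g ∨ ξ = f + g ∨ ξ = f - g) := by
  classical
  obtain ⟨x1, x2, x3, x4, d12, d13, d14, d23, d24, d34, hA⟩ := Aux.card4 hcard
  have hx1 : x1 ∈ A := (hA x1).2 (Or.inl rfl)
  have hx2 : x2 ∈ A := (hA x2).2 (Or.inr (Or.inl rfl))
  have hx3 : x3 ∈ A := (hA x3).2 (Or.inr (Or.inr (Or.inl rfl)))
  have hx4 : x4 ∈ A := (hA x4).2 (Or.inr (Or.inr (Or.inr rfl)))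
  have i12 := hpnc x1 hx1 x2 hx2 d12
  have i13 := hpnc x1 hx1 x3 hx3 d13
  have i23 := hpnc x2 hx2 x3 hx3 d23
  have vx := Aux.VX A c vee hc hvee hser hx1 hx2 hx3 hx4
    (fun ξ hξ => (hA ξ).1 hξ) i12 i13 i23
  have H : Aux.Concl A := by
    rcases vx with h | h | h
    · exact Aux.MAIN A c vee hc hvee hser x1 x4 x2 x3 (fun ξ => (hA ξ).trans Aux.perm1423)
        d14 d12 d13 (Ne.symm d24) (Ne.symm d34) d23 hpnc h
    · exact Aux.MAIN A c vee hc hvee hser x1 x3 x2 x4 (fun ξ => (hA ξ).trans Aux.perm1324)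
        d13 d12 d14 (Ne.symm d23) d34 d24 hpnc h
    · exact Aux.MAIN A c vee hc hvee hser x1 x2 x3 x4 (fun ξ => hA ξ)
        d12 d13 d14 d23 d24 d34 hpnc h
  exact H
end
end

section
/- Let A consist of the covectors e¹, 2e¹, e², e¹+e², e¹−e² on ℂ² with nonzero multiplicities c₁, c̃₁, c₂, c₊, c₋, with non-degenerate form G = Σ c_α α⊗α. Then A is a trigonometric ∨-system if and only if c₊ = c₋ and 2c̃₁c₂ = c₊(c₁ − c₂). Moreover the condition c₊ = c₋ is equivalent to (e¹, e²) = 0 in the G-induced inner product. -/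
open scoped BigOperators

noncomputable section

def a1 : D 2 := coD 0
def a2 : D 2 := (2:ℂ) • coD 0
def a3 : D 2 := coD 1
def a4 : D 2 := coD 0 + coD 1
def a5 : D 2 := coD 0 - coD 1
def e0 : V 2 := ![1,0]
def e1 : V 2 := ![0,1]
@[simp] lemma a1_app (v : V 2) : a1 v = v 0 := rfl
@[simp] lemma a2_app (v : V 2) : a2 v = 2 * v 0 := rfl
@[simp] lemma a3_app (v : V 2) : a3 v = v 1 := rfl
@[simp] lemma a4_app (v : V 2) : a4 v = v 0 + v 1 := rfl
@[simp] lemma a5_app (v : V 2) : a5 v = v 0 - v 1 := rfl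
@[simp] lemma e0_0 : e0 0 = 1 := rfl
@[simp] lemma e0_1 : e0 1 = 0 := rfl
@[simp] lemma e1_0 : e1 0 = 0 := rfl
@[simp] lemma e1_1 : e1 1 = 1 := rfl
lemma evalv {β γ : D 2} (h : β = γ) (v : V 2) : β v = γ v := by rw [h]
lemma neval {β γ : D 2} (v : V 2) (h : β v ≠ γ v) : β ≠ γ := fun e => h (by rw [e])

lemma n12 : a1 ≠ a2 := neval e0 (by norm_num)
lemma n13 : a1 ≠ a3 := neval e0 (by norm_num)
lemma n14 : a1 ≠ a4 := neval e1 (by norm_num)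
lemma n15 : a1 ≠ a5 := neval e1 (by norm_num)
lemma n23 : a2 ≠ a3 := neval e0 (by norm_num)
lemma n24 : a2 ≠ a4 := neval e0 (by norm_num)
lemma n25 : a2 ≠ a5 := neval e0 (by norm_num)
lemma n34 : a3 ≠ a4 := neval e0 (by norm_num)
lemma n35 : a3 ≠ a5 := neval e0 (by norm_num)
lemma n45 : a4 ≠ a5 := neval e1 (by norm_num)

lemma par_self (α : D 2) : Parallel α α := ⟨1, (one_smul _ _).symm⟩
lemma par12 : Parallel a1 a2 := ⟨2, rfl⟩
lemma par21 : Parallel a2 a1 := ⟨1/2, by ext v; simp [a1, a2, coD]⟩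

lemma np13 : ¬ Parallel a1 a3 := by rintro ⟨t, h⟩; have h1 := evalv h e1; simp at h1
lemma np14 : ¬ Parallel a1 a4 := by rintro ⟨t, h⟩; have h1 := evalv h e1; simp at h1
lemma np15 : ¬ Parallel a1 a5 := by rintro ⟨t, h⟩; have h1 := evalv h e1; simp at h1
lemma np23 : ¬ Parallel a2 a3 := by rintro ⟨t, h⟩; have h1 := evalv h e1; simp at h1
lemma np24 : ¬ Parallel a2 a4 := by rintro ⟨t, h⟩; have h1 := evalv h e1; simp at h1
lemma np25 : ¬ Parallel a2 a5 := by rintro ⟨t, h⟩; have h1 := evalv h e1; simp at h1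
lemma np31 : ¬ Parallel a3 a1 := by rintro ⟨t, h⟩; have h0 := evalv h e0; simp at h0
lemma np32 : ¬ Parallel a3 a2 := by rintro ⟨t, h⟩; have h0 := evalv h e0; simp at h0
lemma np34 : ¬ Parallel a3 a4 := by rintro ⟨t, h⟩; have h0 := evalv h e0; simp at h0
lemma np35 : ¬ Parallel a3 a5 := by rintro ⟨t, h⟩; have h0 := evalv h e0; simp at h0
lemma np41 : ¬ Parallel a4 a1 := by
  rintro ⟨t, h⟩; have h0 := evalv h e0; have h1 := evalv h e1; simp at h0 h1
  exact one_ne_zero (α := ℂ) (by linear_combination h0 - h1)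
lemma np42 : ¬ Parallel a4 a2 := by
  rintro ⟨t, h⟩; have h0 := evalv h e0; have h1 := evalv h e1; simp at h0 h1
  exact two_ne_zero (α := ℂ) (by linear_combination h0 - h1)
lemma np43 : ¬ Parallel a4 a3 := by
  rintro ⟨t, h⟩; have h0 := evalv h e0; have h1 := evalv h e1; simp at h0 h1
  exact one_ne_zero (α := ℂ) (by linear_combination h1 - h0)
lemma np45 : ¬ Parallel a4 a5 := by
  rintro ⟨t, h⟩; have h0 := evalv h e0; have h1 := evalv h e1; simp at h0 h1
  exact two_ne_zero (α := ℂ) (by linear_combination h0 - h1)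
lemma np51 : ¬ Parallel a5 a1 := by
  rintro ⟨t, h⟩; have h0 := evalv h e0; have h1 := evalv h e1; simp at h0 h1
  exact one_ne_zero (α := ℂ) (by linear_combination h0 + h1)
lemma np52 : ¬ Parallel a5 a2 := by
  rintro ⟨t, h⟩; have h0 := evalv h e0; have h1 := evalv h e1; simp at h0 h1
  exact two_ne_zero (α := ℂ) (by linear_combination h0 + h1)
lemma np53 : ¬ Parallel a5 a3 := by
  rintro ⟨t, h⟩; have h0 := evalv h e0; have h1 := evalv h e1; simp at h0 h1
  exact one_ne_zero (α := ℂ) (by linear_combination h0 + h1)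
lemma np54 : ¬ Parallel a5 a4 := by
  rintro ⟨t, h⟩; have h0 := evalv h e0; have h1 := evalv h e1; simp at h0 h1
  exact two_ne_zero (α := ℂ) (by linear_combination h0 + h1)

lemma ss_symm {α x y : D 2} (h : SameSer α x y) : SameSer α y x := by
  obtain ⟨m, h | h⟩ := h
  · refine ⟨-m, Or.inl ?_⟩
    have e : ((-m : ℤ) : ℂ) = -(m:ℂ) := by push_cast; ring
    rw [e, neg_smul, ← h]; abel
  · exact ⟨m, Or.inr (by rw [← h]; abel)⟩
lemma ss_self (α γ : D 2) : SameSer α γ γ := ⟨0, Or.inl (by simp)⟩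
lemma ssdiff {α x y : D 2} (m : ℤ) (h : x - y = (m:ℂ) • α) : SameSer α x y := ⟨m, Or.inl h⟩
lemma sssum {α x y : D 2} (m : ℤ) (h : x + y = (m:ℂ) • α) : SameSer α x y := ⟨m, Or.inr h⟩

lemma ss1_34 : SameSer a1 a3 a4 := ssdiff (-1) (by ext v; simp [a1,a3,a4,coD]; try ring)
lemma ss1_35 : SameSer a1 a3 a5 := sssum 1 (by ext v; simp [a1,a3,a5,coD]; try ring)
lemma ss1_45 : SameSer a1 a4 a5 := sssum 2 (by ext v; simp [a1,a4,a5,coD]; try ring)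
lemma ss2_45 : SameSer a2 a4 a5 := sssum 1 (by ext v; simp [a2,a4,a5,coD]; try ring)
lemma ss3_14 : SameSer a3 a1 a4 := ssdiff (-1) (by ext v; simp [a3,a1,a4,coD]; try ring)
lemma ss3_15 : SameSer a3 a1 a5 := ssdiff 1 (by ext v; simp [a3,a1,a5,coD]; try ring)
lemma ss3_45 : SameSer a3 a4 a5 := ssdiff 2 (by ext v; simp [a3,a4,a5,coD]; try ring)
lemma ss4_13 : SameSer a4 a1 a3 := sssum 1 (by ext v; simp [a4,a1,a3,coD]; try ring)
lemma ss4_25 : SameSer a4 a2 a5 := ssdiff 1 (by ext v; simp [a4,a2,a5,coD]; try ring)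
lemma ss5_13 : SameSer a5 a1 a3 := ssdiff 1 (by ext v; simp [a5,a1,a3,coD]; try ring)
lemma ss5_24 : SameSer a5 a2 a4 := ssdiff 1 (by ext v; simp [a5,a2,a4,coD]; try ring)

lemma nss2_34 : ¬ SameSer a2 a3 a4 := by
  rintro ⟨m, h | h⟩
  · have h0 := evalv h e0; simp at h0
    have h' : ((2*m:ℤ):ℂ) = ((-1:ℤ):ℂ) := by push_cast; linear_combination -h0
    have := Int.cast_injective (α := ℂ) h'; omega
  · have h1 := evalv h e1; simp at h1
lemma nss2_35 : ¬ SameSer a2 a3 a5 := by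
  rintro ⟨m, h | h⟩
  · have h1 := evalv h e1; simp at h1
  · have h0 := evalv h e0; simp at h0
    have h' : ((2*m:ℤ):ℂ) = ((1:ℤ):ℂ) := by push_cast; linear_combination -h0
    have := Int.cast_injective (α := ℂ) h'; omega
lemma nss3_21 : ¬ SameSer a3 a2 a1 := by
  rintro ⟨m, h | h⟩ <;> (have h0 := evalv h e0; simp at h0)
  · exact one_ne_zero (α := ℂ) (by linear_combination h0)
  · exact one_ne_zero (α := ℂ) (by linear_combination h0/3)
lemma nss3_24 : ¬ SameSer a3 a2 a4 := by
  rintro ⟨m, h | h⟩ <;> (have h0 := evalv h e0; simp at h0)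
  · exact one_ne_zero (α := ℂ) (by linear_combination h0)
  · exact one_ne_zero (α := ℂ) (by linear_combination h0/3)
lemma nss3_25 : ¬ SameSer a3 a2 a5 := by
  rintro ⟨m, h | h⟩ <;> (have h0 := evalv h e0; simp at h0)
  · exact one_ne_zero (α := ℂ) (by linear_combination h0)
  · exact one_ne_zero (α := ℂ) (by linear_combination h0/3)
lemma nss4_12 : ¬ SameSer a4 a1 a2 := by
  rintro ⟨m, h | h⟩ <;> (have h0 := evalv h e0; have h1 := evalv h e1; simp at h0 h1)
  · exact one_ne_zero (α := ℂ) (by linear_combination h1 - h0)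
  · exact one_ne_zero (α := ℂ) (by linear_combination (h0 - h1)/3)
lemma nss4_15 : ¬ SameSer a4 a1 a5 := by
  rintro ⟨m, h | h⟩ <;> (have h0 := evalv h e0; have h1 := evalv h e1; simp at h0 h1)
  · exact one_ne_zero (α := ℂ) (by linear_combination h1 - h0)
  · exact one_ne_zero (α := ℂ) (by linear_combination (h0 - h1)/3)
lemma nss4_32 : ¬ SameSer a4 a3 a2 := by
  rintro ⟨m, h | h⟩ <;> (have h0 := evalv h e0; have h1 := evalv h e1; simp at h0 h1)
  · exact one_ne_zero (α := ℂ) (by linear_combination (h1 - h0)/3)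
  · exact one_ne_zero (α := ℂ) (by linear_combination h0 - h1)
lemma nss4_35 : ¬ SameSer a4 a3 a5 := by
  rintro ⟨m, h | h⟩ <;> (have h0 := evalv h e0; have h1 := evalv h e1; simp at h0 h1)
  · exact one_ne_zero (α := ℂ) (by linear_combination (h1 - h0)/3)
  · exact one_ne_zero (α := ℂ) (by linear_combination h0 - h1)
lemma nss5_12 : ¬ SameSer a5 a1 a2 := by
  rintro ⟨m, h | h⟩ <;> (have h0 := evalv h e0; have h1 := evalv h e1; simp at h0 h1) <;>
    (have h1' : (m:ℂ) = 0 := by exact_mod_cast h1)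
  · exact one_ne_zero (α := ℂ) (by linear_combination -(h0 + h1'))
  · exact one_ne_zero (α := ℂ) (by linear_combination (h0 + h1')/3)
lemma nss5_14 : ¬ SameSer a5 a1 a4 := by
  rintro ⟨m, h | h⟩ <;> (have h0 := evalv h e0; have h1 := evalv h e1; simp at h0 h1)
  · exact one_ne_zero (α := ℂ) (by linear_combination h1 - h0)
  · exact one_ne_zero (α := ℂ) (by linear_combination (h0 + h1)/3)
lemma nss5_32 : ¬ SameSer a5 a3 a2 := by
  rintro ⟨m, h | h⟩ <;> (have h0 := evalv h e0; have h1 := evalv h e1; simp at h0 h1)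
  · exact one_ne_zero (α := ℂ) (by linear_combination -(h0 + h1))
  · exact one_ne_zero (α := ℂ) (by linear_combination (h0 + h1)/3)
lemma nss5_34 : ¬ SameSer a5 a3 a4 := by
  rintro ⟨m, h | h⟩ <;> (have h0 := evalv h e0; have h1 := evalv h e1; simp at h0 h1)
  · have h1' : (m:ℂ) = 0 := by exact_mod_cast h1
    exact one_ne_zero (α := ℂ) (by linear_combination -(h0 + h1'))
  · exact one_ne_zero (α := ℂ) (by linear_combination (h0 + h1)/3)
/-- Proposition 4: the system `e¹, 2e¹, e², e¹+e², e¹−e²` is a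
trigonometric ∨-system iff `c₊ = c₋` and `2c̃₁c₂ = c₊(c₁ − c₂)`; moreover
`c₊ = c₋ ↔ (e¹,e²) = 0`. -/
theorem five_covectors (c₁ tc₁ c₂ cp cm : ℂ)
    (h1 : c₁ ≠ 0) (ht : tc₁ ≠ 0) (h2 : c₂ ≠ 0) (hp : cp ≠ 0) (hm : cm ≠ 0)
    (A : Finset (D 2))
    (hA : ∀ ξ, ξ ∈ A ↔ ξ = coD 0 ∨ ξ = (2 : ℂ) • coD 0 ∨ ξ = coD 1 ∨
      ξ = coD 0 + coD 1 ∨ ξ = coD 0 - coD 1)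
    (c : D 2 → ℂ) (hc1 : c (coD 0) = c₁) (hct : c ((2 : ℂ) • coD 0) = tc₁)
    (hc2 : c (coD 1) = c₂)
    (hcp : c (coD 0 + coD 1) = cp) (hcm : c (coD 0 - coD 1) = cm)
    (hnd : NonDeg (Gform A c))
    (vee : D 2 → V 2) (hvee : ∀ ξ : D 2, ∀ v : V 2, Gform A c (vee ξ) v = ξ v) :
    (SeriesCond A c (fun ξ η => ξ (vee η)) ↔ (cp = cm ∧ 2 * tc₁ * c₂ = cp * (c₁ - c₂))) ∧
      (cp = cm ↔ (coD 0 : D 2) (vee (coD 1)) = 0) := by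
  classical
  have hAeq : A = ({a1, a2, a3, a4, a5} : Finset (D 2)) := by
    apply Finset.ext; intro x
    rw [hA]
    simp only [Finset.mem_insert, Finset.mem_singleton, a1, a2, a3, a4, a5]
  have hca1 : c a1 = c₁ := hc1
  have hca2 : c a2 = tc₁ := hct
  have hca3 : c a3 = c₂ := hc2
  have hca4 : c a4 = cp := hcp
  have hca5 : c a5 = cm := hcm
  have m1 : a1 ∈ A := by rw [hAeq]; simp
  have m2 : a2 ∈ A := by rw [hAeq]; simp
  have m3 : a3 ∈ A := by rw [hAeq]; simp
  have m4 : a4 ∈ A := by rw [hAeq]; simp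
  have m5 : a5 ∈ A := by rw [hAeq]; simp
  have hGf : ∀ u v : V 2, Gform A c u v =
      c₁ * u 0 * v 0 + tc₁ * (2 * u 0) * (2 * v 0) + c₂ * u 1 * v 1
      + cp * (u 0 + u 1) * (v 0 + v 1) + cm * (u 0 - u 1) * (v 0 - v 1) := by
    intro u v
    rw [Gform, hAeq, Finset.sum_insert (by simp [n12, n13, n14, n15]),
      Finset.sum_insert (by simp [n23, n24, n25]),
      Finset.sum_insert (by simp [n34, n35]),
      Finset.sum_insert (by simp [n45]), Finset.sum_singleton,
      hca1, hca2, hca3, hca4, hca5]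
    simp only [a1_app, a2_app, a3_app, a4_app, a5_app]
    ring
  have hdet : (c₁+4*tc₁+cp+cm) * (c₂+cp+cm) - (cp-cm)^2 ≠ 0 := by
    intro hD
    have h5 : (![c₂+cp+cm, -(cp-cm)] : V 2) = 0 := by
      apply hnd
      intro v
      rw [hGf]
      simp only [Matrix.cons_val_zero, Matrix.cons_val_one, Matrix.head_cons]
      linear_combination v 0 * hD
    have hd0 : c₂+cp+cm = 0 := by simpa using congrFun h5 0
    have hb0 : -(cp-cm) = 0 := by simpa using congrFun h5 1
    have h6 : (![0,1] : V 2) = 0 := by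
      apply hnd
      intro v
      rw [hGf]
      simp only [Matrix.cons_val_zero, Matrix.cons_val_one, Matrix.head_cons]
      linear_combination (- v 0) * hb0 + v 1 * hd0
    simpa using congrFun h6 1
  have E30 := hvee (coD 1) e0
  have E31 := hvee (coD 1) e1
  rw [hGf] at E30 E31
  simp only [show (coD 1 : D 2) = a3 from rfl, a3_app, e0_0, e0_1, e1_0, e1_1] at E30 E31
  have key3 : ((c₁+4*tc₁+cp+cm) * (c₂+cp+cm) - (cp-cm)^2) * (vee a3 0) = -(cp-cm) := by
    linear_combination (c₂+cp+cm) * E30 - (cp-cm) * E31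
  have iff2 : cp = cm ↔ (coD 0 : D 2) (vee (coD 1)) = 0 := by
    constructor
    · intro h
      show vee a3 0 = 0
      have h2' : ((c₁+4*tc₁+cp+cm) * (c₂+cp+cm) - (cp-cm)^2) * (vee a3 0) = 0 := by
        rw [key3, h]; ring
      exact (mul_eq_zero.mp h2').resolve_left hdet
    · intro h
      have h' : vee a3 0 = 0 := h
      rw [h', mul_zero] at key3
      linear_combination key3
  refine ⟨⟨?_, ?_⟩, iff2⟩
  · -- forward
    intro SC
    have is1 : IsSeries A a2 {a3} := by
      refine ⟨by intro x hx; simp only [Finset.mem_singleton] at hx; rw [hx]; exact m3, ?_, ?_, ?_⟩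
      · intro β hβ; simp only [Finset.mem_singleton] at hβ; rw [hβ]; exact np23
      · intro γ1 hg1 γ2 hg2; simp only [Finset.mem_singleton] at hg1 hg2; rw [hg1, hg2]
        exact ss_self _ _
      · rintro β hβ hnpar ⟨γ, hγ, hss⟩
        simp only [Finset.mem_singleton] at hγ ⊢
        rw [hγ] at hss
        rw [hAeq] at hβ; simp only [Finset.mem_insert, Finset.mem_singleton] at hβ
        rcases hβ with rfl | rfl | rfl | rfl | rfl
        · exact absurd par21 hnpar
        · exact absurd (par_self _) hnpar
        · rfl
        · exact absurd hss (fun h => nss2_34 (ss_symm h))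
        · exact absurd hss (fun h => nss2_35 (ss_symm h))
    have H := SC a2 m2 {a3} is1 e0 e1
    rw [Finset.sum_singleton, hca3] at H
    simp only [wedge, a2_app, a3_app, e0_0, e0_1, e1_0, e1_1] at H
    have hp0 : (coD 0 : D 2) (vee (coD 1)) = 0 := by
      show vee a3 0 = 0
      norm_num [mul_eq_zero, h2] at H
      exact H
    have hcpm : cp = cm := iff2.mpr hp0
    refine ⟨hcpm, ?_⟩
    obtain rfl : cp = cm := hcpm
    have had : (c₁+4*tc₁+2*cp) * (c₂+2*cp) ≠ 0 := fun h => hdet (by linear_combination h)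
    have ha : (c₁+4*tc₁+2*cp) ≠ 0 := left_ne_zero_of_mul had
    have hd : (c₂+2*cp) ≠ 0 := right_ne_zero_of_mul had
    have keyv : ∀ β : D 2, (c₁+4*tc₁+2*cp) * vee β 0 = β e0 ∧ (c₂+2*cp) * vee β 1 = β e1 := by
      intro β
      have F0 := hvee β e0; have F1 := hvee β e1
      rw [hGf] at F0 F1
      simp only [e0_0, e0_1, e1_0, e1_1] at F0 F1
      exact ⟨by linear_combination F0, by linear_combination F1⟩
    have K10 : (c₁+4*tc₁+2*cp) * vee a1 0 = 1 := by simpa using (keyv a1).1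
    have K11 : (c₂+2*cp) * vee a1 1 = 0 := by simpa using (keyv a1).2
    have K20 : (c₁+4*tc₁+2*cp) * vee a2 0 = 2 := by simpa using (keyv a2).1
    have K21 : (c₂+2*cp) * vee a2 1 = 0 := by simpa using (keyv a2).2
    have K30 : (c₁+4*tc₁+2*cp) * vee a3 0 = 0 := by simpa using (keyv a3).1
    have K31 : (c₂+2*cp) * vee a3 1 = 1 := by simpa using (keyv a3).2
    have K40 : (c₁+4*tc₁+2*cp) * vee a4 0 = 1 := by simpa using (keyv a4).1
    have K41 : (c₂+2*cp) * vee a4 1 = 1 := by simpa using (keyv a4).2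
    have K50 : (c₁+4*tc₁+2*cp) * vee a5 0 = 1 := by simpa using (keyv a5).1
    have K51 : (c₂+2*cp) * vee a5 1 = -1 := by simpa using (keyv a5).2
    have cancel : ∀ x : ℂ, (c₁+4*tc₁+2*cp) * ((c₂+2*cp) * x) = 0 → x = 0 := by
      intro x hx
      rcases mul_eq_zero.mp hx with h | h
      · exact absurd h ha
      · rcases mul_eq_zero.mp h with h' | h'
        · exact absurd h' hd
        · exact h'
    have is2 : IsSeries A a4 {a1, a3} := by
      refine ⟨?_, ?_, ?_, ?_⟩
      · intro x hx; simp only [Finset.mem_insert, Finset.mem_singleton] at hx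
        rcases hx with rfl | rfl; exacts [m1, m3]
      · intro β hβ; simp only [Finset.mem_insert, Finset.mem_singleton] at hβ
        rcases hβ with rfl | rfl; exacts [np41, np43]
      · intro γ1 hg1 γ2 hg2; simp only [Finset.mem_insert, Finset.mem_singleton] at hg1 hg2
        rcases hg1 with rfl | rfl <;> rcases hg2 with rfl | rfl
        exacts [ss_self _ _, ss4_13, ss_symm ss4_13, ss_self _ _]
      · rintro β hβ hnpar ⟨γ, hγ, hss⟩
        simp only [Finset.mem_insert, Finset.mem_singleton] at hγ ⊢
        rw [hAeq] at hβ; simp only [Finset.mem_insert, Finset.mem_singleton] at hβ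
        rcases hβ with rfl | rfl | rfl | rfl | rfl
        · exact Or.inl rfl
        · rcases hγ with rfl | rfl
          · exact absurd hss (fun h => nss4_12 (ss_symm h))
          · exact absurd hss (fun h => nss4_32 (ss_symm h))
        · exact Or.inr rfl
        · exact absurd (par_self _) hnpar
        · rcases hγ with rfl | rfl
          · exact absurd hss (fun h => nss4_15 (ss_symm h))
          · exact absurd hss (fun h => nss4_35 (ss_symm h))
    have H2 := SC a4 m4 {a1, a3} is2 e0 e1
    rw [Finset.sum_insert (by simp [n13]), Finset.sum_singleton, hca1, hca3] at H2
    simp only [wedge, a4_app, a1_app, a3_app, e0_0, e0_1, e1_0, e1_1] at H2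
    linear_combination (1/2)*((c₁+4*tc₁+2*cp)*(c₂+2*cp))*H2
      + ((1/2)*c₁*(c₂+2*cp))*K10 + ((1/2)*c₁*(c₁+4*tc₁+2*cp))*K11
      - ((1/2)*c₂*(c₂+2*cp))*K30 - ((1/2)*c₂*(c₁+4*tc₁+2*cp))*K31
  · rintro ⟨hcpm, hrel⟩
    obtain rfl : cp = cm := hcpm
    have had : (c₁+4*tc₁+2*cp) * (c₂+2*cp) ≠ 0 := fun h => hdet (by linear_combination h)
    have ha : (c₁+4*tc₁+2*cp) ≠ 0 := left_ne_zero_of_mul had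
    have hd : (c₂+2*cp) ≠ 0 := right_ne_zero_of_mul had
    have keyv : ∀ β : D 2, (c₁+4*tc₁+2*cp) * vee β 0 = β e0 ∧ (c₂+2*cp) * vee β 1 = β e1 := by
      intro β
      have F0 := hvee β e0; have F1 := hvee β e1
      rw [hGf] at F0 F1
      simp only [e0_0, e0_1, e1_0, e1_1] at F0 F1
      exact ⟨by linear_combination F0, by linear_combination F1⟩
    have P1 : vee a1 0 = 1/(c₁+4*tc₁+2*cp) := by
      rw [eq_div_iff ha]; have := (keyv a1).1; simp only [a1_app, e0_0] at this
      linear_combination this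
    have Q1 : vee a1 1 = 0 := by
      have := (keyv a1).2; simp only [a1_app, e1_0] at this
      exact (mul_eq_zero.mp this).resolve_left hd
    have P2 : vee a2 0 = 2/(c₁+4*tc₁+2*cp) := by
      rw [eq_div_iff ha]; have := (keyv a2).1; simp only [a2_app, e0_0] at this
      linear_combination this
    have Q2 : vee a2 1 = 0 := by
      have := (keyv a2).2; simp only [a2_app, e1_0] at this
      have h0 : (c₂+2*cp) * vee a2 1 = 0 := by linear_combination this
      exact (mul_eq_zero.mp h0).resolve_left hd
    have P3 : vee a3 0 = 0 := by
      have := (keyv a3).1; simp only [a3_app, e0_1] at this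
      exact (mul_eq_zero.mp this).resolve_left ha
    have Q3 : vee a3 1 = 1/(c₂+2*cp) := by
      rw [eq_div_iff hd]; have := (keyv a3).2; simp only [a3_app, e1_1] at this
      linear_combination this
    have P4 : vee a4 0 = 1/(c₁+4*tc₁+2*cp) := by
      rw [eq_div_iff ha]; have := (keyv a4).1; simp only [a4_app, e0_0, e0_1] at this
      linear_combination this
    have Q4 : vee a4 1 = 1/(c₂+2*cp) := by
      rw [eq_div_iff hd]; have := (keyv a4).2; simp only [a4_app, e1_0, e1_1] at this
      linear_combination this
    have P5 : vee a5 0 = 1/(c₁+4*tc₁+2*cp) := by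
      rw [eq_div_iff ha]; have := (keyv a5).1; simp only [a5_app, e0_0, e0_1] at this
      linear_combination this
    have Q5 : vee a5 1 = -1/(c₂+2*cp) := by
      rw [eq_div_iff hd]; have := (keyv a5).2; simp only [a5_app, e1_0, e1_1] at this
      linear_combination this
    have K10 : (c₁+4*tc₁+2*cp) * vee a1 0 = 1 := by simpa using (keyv a1).1
    have K11 : (c₂+2*cp) * vee a1 1 = 0 := by simpa using (keyv a1).2
    have K20 : (c₁+4*tc₁+2*cp) * vee a2 0 = 2 := by simpa using (keyv a2).1
    have K21 : (c₂+2*cp) * vee a2 1 = 0 := by simpa using (keyv a2).2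
    have K30 : (c₁+4*tc₁+2*cp) * vee a3 0 = 0 := by simpa using (keyv a3).1
    have K31 : (c₂+2*cp) * vee a3 1 = 1 := by simpa using (keyv a3).2
    have K40 : (c₁+4*tc₁+2*cp) * vee a4 0 = 1 := by simpa using (keyv a4).1
    have K41 : (c₂+2*cp) * vee a4 1 = 1 := by simpa using (keyv a4).2
    have K50 : (c₁+4*tc₁+2*cp) * vee a5 0 = 1 := by simpa using (keyv a5).1
    have K51 : (c₂+2*cp) * vee a5 1 = -1 := by simpa using (keyv a5).2
    have cancel : ∀ x : ℂ, (c₁+4*tc₁+2*cp) * ((c₂+2*cp) * x) = 0 → x = 0 := by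
      intro x hx
      rcases mul_eq_zero.mp hx with h | h
      · exact absurd h ha
      · rcases mul_eq_zero.mp h with h' | h'
        · exact absurd h' hd
        · exact h'
    intro α hα Γ hΓ v w
    obtain ⟨hsub, hnpr, hcl, hmax⟩ := hΓ
    rw [hAeq] at hα; simp only [Finset.mem_insert, Finset.mem_singleton] at hα
    rcases hα with rfl | rfl | rfl | rfl | rfl
    · -- α = a1
      have h1n : a1 ∉ Γ := fun h => hnpr a1 h (par_self _)
      have h2n : a2 ∉ Γ := fun h => hnpr a2 h par12
      by_cases h3 : a3 ∈ Γ
      · have h4 : a4 ∈ Γ := hmax a4 m4 np14 ⟨a3, h3, ss_symm ss1_34⟩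
        have h5 : a5 ∈ Γ := hmax a5 m5 np15 ⟨a3, h3, ss_symm ss1_35⟩
        have hGeq : Γ = {a3, a4, a5} := by
          apply Finset.ext; intro x
          simp only [Finset.mem_insert, Finset.mem_singleton]
          constructor
          · intro hx
            have hx5 := hsub hx; rw [hAeq] at hx5
            simp only [Finset.mem_insert, Finset.mem_singleton] at hx5
            rcases hx5 with rfl | rfl | rfl | rfl | rfl
            exacts [absurd hx h1n, absurd hx h2n, Or.inl rfl, Or.inr (Or.inl rfl),
              Or.inr (Or.inr rfl)]
          · rintro (rfl | rfl | rfl); exacts [h3, h4, h5]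
        rw [hGeq, Finset.sum_insert (by simp [n34, n35]), Finset.sum_insert (by simp [n45]),
          Finset.sum_singleton, hca3, hca4, hca5]
        simp only [wedge, a1_app, a3_app, a4_app, a5_app]
        rw [P3, P4, P5]
        field_simp
        ring
      · have h4n : a4 ∉ Γ := fun h => h3 (hmax a3 m3 np13 ⟨a4, h, ss1_34⟩)
        have h5n : a5 ∉ Γ := fun h => h3 (hmax a3 m3 np13 ⟨a5, h, ss1_35⟩)
        have hGeq : Γ = ∅ := by
          apply Finset.eq_empty_of_forall_notMem; intro x hx
          have hx5 := hsub hx; rw [hAeq] at hx5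
          simp only [Finset.mem_insert, Finset.mem_singleton] at hx5
          rcases hx5 with rfl | rfl | rfl | rfl | rfl
          exacts [h1n hx, h2n hx, h3 hx, h4n hx, h5n hx]
        rw [hGeq, Finset.sum_empty]
    · -- α = a2
      have h1n : a1 ∉ Γ := fun h => hnpr a1 h par21
      have h2n : a2 ∉ Γ := fun h => hnpr a2 h (par_self _)
      by_cases h3 : a3 ∈ Γ
      · have h4n : a4 ∉ Γ := fun h => nss2_34 (hcl a3 h3 a4 h)
        have h5n : a5 ∉ Γ := fun h => nss2_35 (hcl a3 h3 a5 h)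
        have hGeq : Γ = {a3} := by
          apply Finset.ext; intro x
          simp only [Finset.mem_singleton]
          constructor
          · intro hx
            have hx5 := hsub hx; rw [hAeq] at hx5
            simp only [Finset.mem_insert, Finset.mem_singleton] at hx5
            rcases hx5 with rfl | rfl | rfl | rfl | rfl
            exacts [absurd hx h1n, absurd hx h2n, rfl, absurd hx h4n, absurd hx h5n]
          · rintro rfl; exact h3
        rw [hGeq, Finset.sum_singleton, hca3]
        simp only [wedge, a2_app, a3_app]
        rw [P3]
        ring
      · by_cases h4 : a4 ∈ Γ
        · have h5 : a5 ∈ Γ := hmax a5 m5 np25 ⟨a4, h4, ss_symm ss2_45⟩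
          have hGeq : Γ = {a4, a5} := by
            apply Finset.ext; intro x
            simp only [Finset.mem_insert, Finset.mem_singleton]
            constructor
            · intro hx
              have hx5 := hsub hx; rw [hAeq] at hx5
              simp only [Finset.mem_insert, Finset.mem_singleton] at hx5
              rcases hx5 with rfl | rfl | rfl | rfl | rfl
              exacts [absurd hx h1n, absurd hx h2n, absurd hx h3, Or.inl rfl, Or.inr rfl]
            · rintro (rfl | rfl); exacts [h4, h5]
          rw [hGeq, Finset.sum_insert (by simp [n45]), Finset.sum_singleton, hca4, hca5]
          simp only [wedge, a2_app, a4_app, a5_app]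
          rw [P4, P5]
          field_simp
          ring
        · have h5n : a5 ∉ Γ := fun h => h4 (hmax a4 m4 np24 ⟨a5, h, ss2_45⟩)
          have hGeq : Γ = ∅ := by
            apply Finset.eq_empty_of_forall_notMem; intro x hx
            have hx5 := hsub hx; rw [hAeq] at hx5
            simp only [Finset.mem_insert, Finset.mem_singleton] at hx5
            rcases hx5 with rfl | rfl | rfl | rfl | rfl
            exacts [h1n hx, h2n hx, h3 hx, h4 hx, h5n hx]
          rw [hGeq, Finset.sum_empty]
    · -- α = a3
      have h3n : a3 ∉ Γ := fun h => hnpr a3 h (par_self _)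
      by_cases hh2 : a2 ∈ Γ
      · have h1n : a1 ∉ Γ := fun h => nss3_21 (hcl a2 hh2 a1 h)
        have h4n : a4 ∉ Γ := fun h => nss3_24 (hcl a2 hh2 a4 h)
        have h5n : a5 ∉ Γ := fun h => nss3_25 (hcl a2 hh2 a5 h)
        have hGeq : Γ = {a2} := by
          apply Finset.ext; intro x
          simp only [Finset.mem_singleton]
          constructor
          · intro hx
            have hx5 := hsub hx; rw [hAeq] at hx5
            simp only [Finset.mem_insert, Finset.mem_singleton] at hx5
            rcases hx5 with rfl | rfl | rfl | rfl | rfl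
            exacts [absurd hx h1n, rfl, absurd hx h3n, absurd hx h4n, absurd hx h5n]
          · rintro rfl; exact hh2
        rw [hGeq, Finset.sum_singleton, hca2]
        simp only [wedge, a2_app, a3_app]
        rw [Q2]
        ring
      · by_cases hh1 : a1 ∈ Γ
        · have h4 : a4 ∈ Γ := hmax a4 m4 np34 ⟨a1, hh1, ss_symm ss3_14⟩
          have h5 : a5 ∈ Γ := hmax a5 m5 np35 ⟨a1, hh1, ss_symm ss3_15⟩
          have hGeq : Γ = {a1, a4, a5} := by
            apply Finset.ext; intro x
            simp only [Finset.mem_insert, Finset.mem_singleton]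
            constructor
            · intro hx
              have hx5 := hsub hx; rw [hAeq] at hx5
              simp only [Finset.mem_insert, Finset.mem_singleton] at hx5
              rcases hx5 with rfl | rfl | rfl | rfl | rfl
              exacts [Or.inl rfl, absurd hx hh2, absurd hx h3n, Or.inr (Or.inl rfl),
                Or.inr (Or.inr rfl)]
            · rintro (rfl | rfl | rfl); exacts [hh1, h4, h5]
          rw [hGeq, Finset.sum_insert (by simp [n14, n15]), Finset.sum_insert (by simp [n45]),
            Finset.sum_singleton, hca1, hca4, hca5]
          simp only [wedge, a1_app, a3_app, a4_app, a5_app]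
          rw [Q1, Q4, Q5]
          field_simp
          ring
        · have h4n : a4 ∉ Γ := fun h => hh1 (hmax a1 m1 np31 ⟨a4, h, ss3_14⟩)
          have h5n : a5 ∉ Γ := fun h => hh1 (hmax a1 m1 np31 ⟨a5, h, ss3_15⟩)
          have hGeq : Γ = ∅ := by
            apply Finset.eq_empty_of_forall_notMem; intro x hx
            have hx5 := hsub hx; rw [hAeq] at hx5
            simp only [Finset.mem_insert, Finset.mem_singleton] at hx5
            rcases hx5 with rfl | rfl | rfl | rfl | rfl
            exacts [hh1 hx, hh2 hx, h3n hx, h4n hx, h5n hx]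
          rw [hGeq, Finset.sum_empty]
    · -- α = a4
      have h4n : a4 ∉ Γ := fun h => hnpr a4 h (par_self _)
      by_cases hh1 : a1 ∈ Γ
      · have h3 : a3 ∈ Γ := hmax a3 m3 np43 ⟨a1, hh1, ss_symm ss4_13⟩
        have h2n : a2 ∉ Γ := fun h => nss4_12 (hcl a1 hh1 a2 h)
        have h5n : a5 ∉ Γ := fun h => nss4_15 (hcl a1 hh1 a5 h)
        have hGeq : Γ = {a1, a3} := by
          apply Finset.ext; intro x
          simp only [Finset.mem_insert, Finset.mem_singleton]
          constructor
          · intro hx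
            have hx5 := hsub hx; rw [hAeq] at hx5
            simp only [Finset.mem_insert, Finset.mem_singleton] at hx5
            rcases hx5 with rfl | rfl | rfl | rfl | rfl
            exacts [Or.inl rfl, absurd hx h2n, Or.inr rfl, absurd hx h4n, absurd hx h5n]
          · rintro (rfl | rfl); exacts [hh1, h3]
        rw [hGeq, Finset.sum_insert (by simp [n13]), Finset.sum_singleton, hca1, hca3]
        simp only [wedge, a1_app, a3_app, a4_app]
        rw [P1, Q1, P3, Q3]
        field_simp
        linear_combination (2 * (v 0 * w 1 - v 1 * w 0)) * hrel
      · by_cases hh2 : a2 ∈ Γ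
        · have h5 : a5 ∈ Γ := hmax a5 m5 np45 ⟨a2, hh2, ss_symm ss4_25⟩
          have h3n : a3 ∉ Γ := fun h => hh1 (hmax a1 m1 np41 ⟨a3, h, ss4_13⟩)
          have hGeq : Γ = {a2, a5} := by
            apply Finset.ext; intro x
            simp only [Finset.mem_insert, Finset.mem_singleton]
            constructor
            · intro hx
              have hx5 := hsub hx; rw [hAeq] at hx5
              simp only [Finset.mem_insert, Finset.mem_singleton] at hx5
              rcases hx5 with rfl | rfl | rfl | rfl | rfl
              exacts [absurd hx hh1, Or.inl rfl, absurd hx h3n, absurd hx h4n, Or.inr rfl]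
            · rintro (rfl | rfl); exacts [hh2, h5]
          rw [hGeq, Finset.sum_insert (by simp [n25]), Finset.sum_singleton, hca2, hca5]
          simp only [wedge, a2_app, a4_app, a5_app]
          apply cancel
          linear_combination (tc₁*(c₂+2*cp)*(2*(v 1 * w 0 - v 0 * w 1)))*K20
            + (tc₁*(c₁+4*tc₁+2*cp)*(2*(v 1 * w 0 - v 0 * w 1)))*K21
            + (cp*(c₂+2*cp)*(2*(v 1 * w 0 - v 0 * w 1)))*K50
            + (cp*(c₁+4*tc₁+2*cp)*(2*(v 1 * w 0 - v 0 * w 1)))*K51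
            + (2*(v 1 * w 0 - v 0 * w 1))*hrel
        · have h3n : a3 ∉ Γ := fun h => hh1 (hmax a1 m1 np41 ⟨a3, h, ss4_13⟩)
          have h5n : a5 ∉ Γ := fun h => hh2 (hmax a2 m2 np42 ⟨a5, h, ss4_25⟩)
          have hGeq : Γ = ∅ := by
            apply Finset.eq_empty_of_forall_notMem; intro x hx
            have hx5 := hsub hx; rw [hAeq] at hx5
            simp only [Finset.mem_insert, Finset.mem_singleton] at hx5
            rcases hx5 with rfl | rfl | rfl | rfl | rfl
            exacts [hh1 hx, hh2 hx, h3n hx, h4n hx, h5n hx]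
          rw [hGeq, Finset.sum_empty]
    · -- α = a5
      have h5n : a5 ∉ Γ := fun h => hnpr a5 h (par_self _)
      by_cases hh1 : a1 ∈ Γ
      · have h3 : a3 ∈ Γ := hmax a3 m3 np53 ⟨a1, hh1, ss_symm ss5_13⟩
        have h2n : a2 ∉ Γ := fun h => nss5_12 (hcl a1 hh1 a2 h)
        have h4n : a4 ∉ Γ := fun h => nss5_14 (hcl a1 hh1 a4 h)
        have hGeq : Γ = {a1, a3} := by
          apply Finset.ext; intro x
          simp only [Finset.mem_insert, Finset.mem_singleton]
          constructor
          · intro hx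
            have hx5 := hsub hx; rw [hAeq] at hx5
            simp only [Finset.mem_insert, Finset.mem_singleton] at hx5
            rcases hx5 with rfl | rfl | rfl | rfl | rfl
            exacts [Or.inl rfl, absurd hx h2n, Or.inr rfl, absurd hx h4n, absurd hx h5n]
          · rintro (rfl | rfl); exacts [hh1, h3]
        rw [hGeq, Finset.sum_insert (by simp [n13]), Finset.sum_singleton, hca1, hca3]
        simp only [wedge, a1_app, a3_app, a5_app]
        apply cancel
        linear_combination (c₁*(c₂+2*cp)*(v 0 * w 1 - v 1 * w 0))*K10
          - (c₁*(c₁+4*tc₁+2*cp)*(v 0 * w 1 - v 1 * w 0))*K11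
          + (c₂*(c₂+2*cp)*(v 0 * w 1 - v 1 * w 0))*K30
          - (c₂*(c₁+4*tc₁+2*cp)*(v 0 * w 1 - v 1 * w 0))*K31
          - (2*(v 0 * w 1 - v 1 * w 0))*hrel
      · by_cases hh2 : a2 ∈ Γ
        · have h4 : a4 ∈ Γ := hmax a4 m4 np54 ⟨a2, hh2, ss_symm ss5_24⟩
          have h3n : a3 ∉ Γ := fun h => hh1 (hmax a1 m1 np51 ⟨a3, h, ss5_13⟩)
          have hGeq : Γ = {a2, a4} := by
            apply Finset.ext; intro x
            simp only [Finset.mem_insert, Finset.mem_singleton]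
            constructor
            · intro hx
              have hx5 := hsub hx; rw [hAeq] at hx5
              simp only [Finset.mem_insert, Finset.mem_singleton] at hx5
              rcases hx5 with rfl | rfl | rfl | rfl | rfl
              exacts [absurd hx hh1, Or.inl rfl, absurd hx h3n, Or.inr rfl, absurd hx h5n]
            · rintro (rfl | rfl); exacts [hh2, h4]
          rw [hGeq, Finset.sum_insert (by simp [n24]), Finset.sum_singleton, hca2, hca4]
          simp only [wedge, a2_app, a4_app, a5_app]
          apply cancel
          linear_combination (tc₁*(c₂+2*cp)*(2*(v 0 * w 1 - v 1 * w 0)))*K20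
            - (tc₁*(c₁+4*tc₁+2*cp)*(2*(v 0 * w 1 - v 1 * w 0)))*K21
            + (cp*(c₂+2*cp)*(2*(v 0 * w 1 - v 1 * w 0)))*K40
            - (cp*(c₁+4*tc₁+2*cp)*(2*(v 0 * w 1 - v 1 * w 0)))*K41
            + (2*(v 0 * w 1 - v 1 * w 0))*hrel
        · have h3n : a3 ∉ Γ := fun h => hh1 (hmax a1 m1 np51 ⟨a3, h, ss5_13⟩)
          have h4n : a4 ∉ Γ := fun h => hh2 (hmax a2 m2 np52 ⟨a4, h, ss5_24⟩)
          have hGeq : Γ = ∅ := by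
            apply Finset.eq_empty_of_forall_notMem; intro x hx
            have hx5 := hsub hx; rw [hAeq] at hx5
            simp only [Finset.mem_insert, Finset.mem_singleton] at hx5
            rcases hx5 with rfl | rfl | rfl | rfl | rfl
            exacts [hh1 hx, hh2 hx, h3n hx, h4n hx, h5n hx]
          rw [hGeq, Finset.sum_empty]
end
end

section
/- Let A₁ ⊂ V₁*, A₂ ⊂ V₂* be trigonometric ∨-systems with non-degenerate ∨-forms (·,·)₁ and (·,·)₂. Suppose the direct sum system A₁ ⊕ A₂ on V₁ ⊕ V₂ satisfies: for all a,b,c,d ∈ V₁⊕V₂, Σ_{α,β ∈ (A₁⊕A₂)₊} (λ²/4·(α,β) − 1) c_α c_β B_{α,β}(a,b) B_{α,β}(c,d) = 0, where B_{α,β}(a,b) = α(a)β(b) − α(b)β(a). Then taking a,c ∈ V₁ and b,d ∈ V₂ yields (a,c)₁ (b,d)₂ = 0; hence if dim V₁ ≥ 1 and dim V₂ ≥ 1 with non-degenerate forms, the condition fails. -/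
open scoped BigOperators

noncomputable section

/-- Remark 1: a direct sum of two trigonometric ∨-systems with
non-degenerate ∨-forms cannot satisfy the second WDVV condition: the condition forces
`(a,c)₁ (b,d)₂ = 0` for all vectors, contradicting non-degeneracy. -/
theorem direct_sum_fails (n m : ℕ) (hn : 0 < n) (hm : 0 < m)
    (A₁ : Finset (D n)) (A₂ : Finset (D m)) (c₁ : D n → ℂ) (c₂ : D m → ℂ)
    (vee₁ : D n → V n) (hvee₁ : ∀ ξ : D n, ∀ v : V n, Gform A₁ c₁ (vee₁ ξ) v = ξ v)
    (vee₂ : D m → V m) (hvee₂ : ∀ ξ : D m, ∀ v : V m, Gform A₂ c₂ (vee₂ ξ) v = ξ v)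
    (hser₁ : SeriesCond A₁ c₁ (fun ξ η => ξ (vee₁ η)))
    (hser₂ : SeriesCond A₂ c₂ (fun ξ η => ξ (vee₂ η)))
    (hnd1 : NonDeg (Gform A₁ c₁)) (hnd2 : NonDeg (Gform A₂ c₂))
    (A' : Finset (Module.Dual ℂ (V n × V m))) (c' : Module.Dual ℂ (V n × V m) → ℂ)
    (ip' : Module.Dual ℂ (V n × V m) → Module.Dual ℂ (V n × V m) → ℂ)
    (hA' : ∀ ξ, ξ ∈ A' ↔ ((∃ α ∈ A₁, ξ = α.comp (LinearMap.fst ℂ (V n) (V m))) ∨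
      (∃ β ∈ A₂, ξ = β.comp (LinearMap.snd ℂ (V n) (V m)))))
    (hc'1 : ∀ α ∈ A₁, c' (α.comp (LinearMap.fst ℂ (V n) (V m))) = c₁ α)
    (hc'2 : ∀ β ∈ A₂, c' (β.comp (LinearMap.snd ℂ (V n) (V m))) = c₂ β)
    (hip11 : ∀ α ∈ A₁, ∀ β ∈ A₁, ip' (α.comp (LinearMap.fst ℂ (V n) (V m)))
      (β.comp (LinearMap.fst ℂ (V n) (V m))) = α (vee₁ β))
    (hip22 : ∀ α ∈ A₂, ∀ β ∈ A₂, ip' (α.comp (LinearMap.snd ℂ (V n) (V m)))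
      (β.comp (LinearMap.snd ℂ (V n) (V m))) = α (vee₂ β))
    (hcross : ∀ α ∈ A₁, ∀ β ∈ A₂,
      ip' (α.comp (LinearMap.fst ℂ (V n) (V m))) (β.comp (LinearMap.snd ℂ (V n) (V m))) = 0 ∧
      ip' (β.comp (LinearMap.snd ℂ (V n) (V m))) (α.comp (LinearMap.fst ℂ (V n) (V m))) = 0)
    (lam : ℂ)
    (hwdvv : ∀ a b u v : V n × V m,
      ∑ α ∈ A', ∑ β ∈ A', (lam ^ 2 / 4 * ip' α β - 1) * c' α * c' β *
        (α a * β b - α b * β a) * (α u * β v - α v * β u) = 0) :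
    (∀ a u : V n, ∀ b v : V m, Gform A₁ c₁ a u * Gform A₂ c₂ b v = 0) ∧ False := by
  classical
  have key : ∀ a u : V n, ∀ b v : V m, Gform A₁ c₁ a u * Gform A₂ c₂ b v = 0 := by
    intro a u b v
    have hS := hwdvv (a, 0) (0, b) (u, 0) (0, v)
    have hterm : ∀ α ∈ A', ∀ β ∈ A',
        (lam ^ 2 / 4 * ip' α β - 1) * c' α * c' β *
          (α (a,0) * β (0,b) - α (0,b) * β (a,0)) *
          (α (u,0) * β (0,v) - α (0,v) * β (u,0))
        = -((c' α * α (a,0) * α (u,0)) * (c' β * β (0,b) * β (0,v)))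
          - (c' α * α (0,b) * α (0,v)) * (c' β * β (a,0) * β (u,0)) := by
      intro α hα β hβ
      rcases (hA' α).1 hα with ⟨α₁, hα₁, rfl⟩ | ⟨α₂, hα₂, rfl⟩ <;>
        rcases (hA' β).1 hβ with ⟨β₁, hβ₁, rfl⟩ | ⟨β₂, hβ₂, rfl⟩
      · simp only [LinearMap.comp_apply, LinearMap.fst_apply, LinearMap.snd_apply, map_zero]
        ring
      · rw [(hcross α₁ hα₁ β₂ hβ₂).1]
        simp only [LinearMap.comp_apply, LinearMap.fst_apply, LinearMap.snd_apply, map_zero]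
        ring
      · rw [(hcross β₁ hβ₁ α₂ hα₂).2]
        simp only [LinearMap.comp_apply, LinearMap.fst_apply, LinearMap.snd_apply, map_zero]
        ring
      · simp only [LinearMap.comp_apply, LinearMap.fst_apply, LinearMap.snd_apply, map_zero]
        ring
    rw [Finset.sum_congr rfl (fun α hα => Finset.sum_congr rfl (fun β hβ => hterm α hα β hβ))]
      at hS
    have hS2 : (0:ℂ) =
        -((∑ ξ ∈ A', c' ξ * ξ (a,0) * ξ (u,0)) * (∑ ξ ∈ A', c' ξ * ξ (0,b) * ξ (0,v)))
        - (∑ ξ ∈ A', c' ξ * ξ (0,b) * ξ (0,v)) * (∑ ξ ∈ A', c' ξ * ξ (a,0) * ξ (u,0)) := by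
      rw [← hS]
      rw [Finset.sum_mul_sum, Finset.sum_mul_sum, ← Finset.sum_neg_distrib]
      rw [← Finset.sum_sub_distrib]
      refine Finset.sum_congr rfl (fun α _ => ?_)
      rw [← Finset.sum_neg_distrib, ← Finset.sum_sub_distrib]
    have hinj1 : Set.InjOn (fun α : D n => α.comp (LinearMap.fst ℂ (V n) (V m))) ↑A₁ := by
      intro α _ α' _ h
      ext x
      have := LinearMap.congr_fun h (Pi.single x 1, (0 : V m))
      simpa using this
    have hinj2 : Set.InjOn (fun β : D m => β.comp (LinearMap.snd ℂ (V n) (V m))) ↑A₂ := by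
      intro β _ β' _ h
      ext x
      have := LinearMap.congr_fun h ((0 : V n), Pi.single x 1)
      simpa using this
    have hT1 : (∑ ξ ∈ A', c' ξ * ξ (a,0) * ξ (u,0)) = Gform A₁ c₁ a u := by
      have hsub : A₁.image (fun α => α.comp (LinearMap.fst ℂ (V n) (V m))) ⊆ A' := by
        intro ξ hξ
        rcases Finset.mem_image.1 hξ with ⟨α, hα, rfl⟩
        exact (hA' _).2 (Or.inl ⟨α, hα, rfl⟩)
      rw [← Finset.sum_subset hsub, Finset.sum_image hinj1]
      · refine Finset.sum_congr rfl (fun α hα => ?_)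
        rw [hc'1 α hα]
        simp [Gform]
      · intro ξ hξ hnot
        rcases (hA' ξ).1 hξ with ⟨α, hα, rfl⟩ | ⟨β, hβ, rfl⟩
        · exact absurd (Finset.mem_image.2 ⟨α, hα, rfl⟩) hnot
        · simp
    have hT2 : (∑ ξ ∈ A', c' ξ * ξ (0,b) * ξ (0,v)) = Gform A₂ c₂ b v := by
      have hsub : A₂.image (fun β => β.comp (LinearMap.snd ℂ (V n) (V m))) ⊆ A' := by
        intro ξ hξ
        rcases Finset.mem_image.1 hξ with ⟨β, hβ, rfl⟩
        exact (hA' _).2 (Or.inr ⟨β, hβ, rfl⟩)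
      rw [← Finset.sum_subset hsub, Finset.sum_image hinj2]
      · refine Finset.sum_congr rfl (fun β hβ => ?_)
        rw [hc'2 β hβ]
        simp [Gform]
      · intro ξ hξ hnot
        rcases (hA' ξ).1 hξ with ⟨α, hα, rfl⟩ | ⟨β, hβ, rfl⟩
        · simp
        · exact absurd (Finset.mem_image.2 ⟨β, hβ, rfl⟩) hnot
    rw [hT1, hT2] at hS2
    linear_combination (1/2 : ℂ) * hS2
  refine ⟨key, ?_⟩
  have h1 : Gform A₁ c₁ (vee₁ (coD ⟨0, hn⟩)) (Pi.single ⟨0, hn⟩ 1) = 1 := by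
    rw [hvee₁]; simp [coD]
  have h2 : Gform A₂ c₂ (vee₂ (coD ⟨0, hm⟩)) (Pi.single ⟨0, hm⟩ 1) = 1 := by
    rw [hvee₂]; simp [coD]
  have := key (vee₁ (coD ⟨0, hn⟩)) (Pi.single ⟨0, hn⟩ 1) (vee₂ (coD ⟨0, hm⟩)) (Pi.single ⟨0, hm⟩ 1)
  rw [h1, h2] at this
  norm_num at this
end
end
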